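/- arXiv:1504.04814 — 7 statements merged into one kernel-verified Lean document; each statement's English description precedes it below -/
import Mathlib

section
/- If θ₀ ∈ ℓ² satisfies θ₀,i² ≤ L i^{−2β−1} for all i with 0 < β < α + 1/2, then for every ε ∈ (0,1), inf{τ² ‖h‖²_{H^{α,τ}} : ‖h − θ₀‖₂ ≤ ε} ≤ C L^{(2α+1)/(2β)} ε^{−(2α−2β+1)/β} / (2α + 1 − 2β), achieved by truncating θ₀ at level N = ⌈(L/(2β))^{1/(2β)} ε^{−1/β}⌉. -/
open Real

lemma bern_tail {s x : ℝ} (hs : 0 < s) (hx : 1 ≤ x) :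
    s * (x + 1) ^ (-s - 1) ≤ x ^ (-s) - (x + 1) ^ (-s) := by
  have hx0 : 0 < x := lt_of_lt_of_le one_pos hx
  have hx1 : 0 < x + 1 := by linarith
  have hb : 1 + (s + 1) * (1 / x) ≤ (1 + 1 / x) ^ (s + 1) :=
    one_add_mul_self_le_rpow_one_add (by nlinarith [one_div_pos.mpr hx0]) (by linarith)
  have key : s / (x + 1) ≤ (1 + 1 / x) ^ s - 1 := by
    have h1 : (1 + 1 / x) ^ (s + 1) = (1 + 1 / x) ^ s * (1 + 1 / x) := by
      rw [rpow_add (by positivity), rpow_one]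
    rw [h1] at hb
    rw [div_le_iff₀ hx1]
    have h4 := mul_le_mul_of_nonneg_right hb hx0.le
    have h5 : (1 + (s + 1) * (1 / x)) * x = x + s + 1 := by field_simp; ring
    have h6 : (1 + 1 / x) ^ s * (1 + 1 / x) * x = (1 + 1/x) ^ s * (x + 1) := by
      field_simp
    nlinarith
  have e1 : x ^ (-s) = (x + 1) ^ (-s) * (1 + 1 / x) ^ s := by
    rw [rpow_neg hx0.le, rpow_neg hx1.le, ← inv_rpow hx0.le, ← inv_rpow hx1.le,
      ← mul_rpow (by positivity) (by positivity)]
    congr 1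
    field_simp
  have e2 : (x + 1) ^ (-s - 1) = (x + 1) ^ (-s) / (x + 1) := by
    rw [sub_eq_add_neg, rpow_add hx1, rpow_neg_one]; ring
  have hpos : 0 < (x + 1) ^ (-s) := rpow_pos_of_pos hx1 _
  rw [e1, e2]
  calc s * ((x+1)^(-s) / (x+1)) = (x+1)^(-s) * (s / (x+1)) := by ring
    _ ≤ (x+1)^(-s) * ((1 + 1/x) ^ s - 1) := mul_le_mul_of_nonneg_left key hpos.le
    _ = (x+1)^(-s) * (1+1/x)^s - (x+1)^(-s) := by ring

lemma bern_head {p x : ℝ} (hp : 0 < p) (hp1 : p ≤ 1) (hx : 0 ≤ x) :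
    p * (x + 1) ^ (p - 1) ≤ (x + 1) ^ p - x ^ p := by
  have hx1 : (0:ℝ) < x + 1 := by linarith
  have hb : (1 + (-1/(x+1))) ^ p ≤ 1 + p * (-1/(x+1)) := by
    apply rpow_one_add_le_one_add_mul_self _ hp.le hp1
    rw [neg_div]
    have : 1/(x+1) ≤ 1 := div_le_one_of_le₀ (by linarith) hx1.le
    linarith
  have hv : 1 + (-1/(x+1)) = x / (x+1) := by field_simp; ring
  rw [hv] at hb
  have e1 : x ^ p = (x+1) ^ p * (x/(x+1)) ^ p := by
    rw [← mul_rpow hx1.le (by positivity)]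
    congr 1
    field_simp
  have e2 : (x + 1) ^ (p - 1) = (x + 1) ^ p / (x + 1) := by
    rw [sub_eq_add_neg, rpow_add hx1, rpow_neg_one]; ring
  have hpos : 0 < (x + 1) ^ p := rpow_pos_of_pos hx1 _
  rw [e1, e2]
  have h4 := mul_le_mul_of_nonneg_left hb hpos.le
  have h5 : (x+1)^p * (1 + p * (-1/(x+1))) = (x+1)^p - p * ((x+1)^p/(x+1)) := by
    field_simp; ring
  nlinarith

lemma tail_tsum {s L : ℝ} (hs : 0 < s) (hL : 0 ≤ L) {N : ℕ} (hN : 1 ≤ N)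
    {a : ℕ → ℝ} (ha0 : ∀ i, 0 ≤ a i) (hlt : ∀ i < N, a i = 0)
    (hge : ∀ i, N ≤ i → a i ≤ L * ((i:ℝ) + 1) ^ (-s - 1)) :
    ∑' i, a i ≤ L * (N:ℝ) ^ (-s) / s := by
  set g : ℕ → ℝ := fun j => ((max j N : ℕ) : ℝ) ^ (-s) with hg
  have hterm : ∀ i, a i ≤ L / s * (g i - g (i + 1)) := by
    intro i
    rcases lt_or_ge i N with h | h
    · have h1 : max i N = N := max_eq_right h.le
      have h2 : max (i+1) N = N := max_eq_right h
      have hgg : g i = g (i+1) := by simp only [hg, h1, h2]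
      rw [hlt i h, hgg, sub_self, mul_zero]
    · have h1 : max i N = i := max_eq_left h
      have h2 : max (i+1) N = i + 1 := max_eq_left (by omega)
      have hx : (1:ℝ) ≤ (i:ℝ) := by exact_mod_cast le_trans hN h
      have hb := bern_tail hs hx
      simp only [hg, h1, h2]
      push_cast
      calc a i ≤ L * ((i:ℝ) + 1) ^ (-s - 1) := hge i h
        _ = L / s * (s * ((i:ℝ) + 1) ^ (-s - 1)) := by field_simp
        _ ≤ L / s * ((i:ℝ) ^ (-s) - ((i:ℝ) + 1) ^ (-s)) :=
            mul_le_mul_of_nonneg_left hb (by positivity)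
  apply Real.tsum_le_of_sum_range_le ha0
  intro n
  calc ∑ i ∈ Finset.range n, a i ≤ ∑ i ∈ Finset.range n, L / s * (g i - g (i+1)) :=
        Finset.sum_le_sum fun i _ => hterm i
    _ = L / s * (g 0 - g n) := by rw [← Finset.mul_sum, Finset.sum_range_sub' g n]
    _ ≤ L / s * g 0 := by
        have h1 : (0:ℝ) ≤ g n := rpow_nonneg (by positivity) _
        nlinarith [div_nonneg hL hs.le]
    _ = L * (N:ℝ) ^ (-s) / s := by
        have : max 0 N = N := Nat.zero_max N
        simp only [hg, this]
        ring

lemma head_sum {c : ℝ} (hc : -1 < c) (N : ℕ) :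
    ∑ i ∈ Finset.range N, ((i:ℝ) + 1) ^ c ≤ max 1 (1/(c+1)) * (N:ℝ) ^ (c + 1) := by
  have hc1 : 0 < c + 1 := by linarith
  rcases le_or_gt 0 c with h | h
  · rcases Nat.eq_zero_or_pos N with rfl | hN
    · simp only [Finset.range_zero, Finset.sum_empty, Nat.cast_zero]
      positivity
    have hNR : (0:ℝ) < N := by exact_mod_cast hN
    calc ∑ i ∈ Finset.range N, ((i:ℝ) + 1) ^ c ≤ ∑ i ∈ Finset.range N, (N:ℝ) ^ c := by
          apply Finset.sum_le_sum
          intro i hi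
          apply rpow_le_rpow (by positivity) _ h
          have : i + 1 ≤ N := Finset.mem_range.mp hi
          exact_mod_cast this
      _ = N * (N:ℝ) ^ c := by rw [Finset.sum_const, Finset.card_range]; ring
      _ = (N:ℝ) ^ (c+1) := by rw [add_comm, rpow_add hNR, rpow_one]
      _ ≤ max 1 (1/(c+1)) * (N:ℝ) ^ (c+1) := by
          nlinarith [rpow_nonneg hNR.le (c+1), le_max_left (1:ℝ) (1/(c+1))]
  · have hterm : ∀ i : ℕ, ((i:ℝ) + 1) ^ c ≤
        1/(c+1) * ((((i+1:ℕ)):ℝ) ^ (c+1) - ((i:ℕ):ℝ) ^ (c+1)) := by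
      intro i
      have hb := bern_head hc1 (by linarith) (Nat.cast_nonneg i : (0:ℝ) ≤ i)
      rw [show c + 1 - 1 = c by ring] at hb
      push_cast
      rw [div_mul_eq_mul_div, le_div_iff₀ hc1]
      nlinarith
    calc ∑ i ∈ Finset.range N, ((i:ℝ) + 1) ^ c
        ≤ ∑ i ∈ Finset.range N, 1/(c+1) * ((((i+1:ℕ)):ℝ) ^ (c+1) - ((i:ℕ):ℝ) ^ (c+1)) :=
          Finset.sum_le_sum fun i _ => hterm i
      _ = 1/(c+1) * ((N:ℝ) ^ (c+1) - ((0:ℕ):ℝ) ^ (c+1)) := by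
          rw [← Finset.mul_sum, Finset.sum_range_sub (fun i => ((i:ℕ):ℝ) ^ (c+1)) N]
      _ = 1/(c+1) * (N:ℝ) ^ (c+1) := by
          norm_num [zero_rpow hc1.ne']
      _ ≤ max 1 (1/(c+1)) * (N:ℝ) ^ (c+1) := by
          apply mul_le_mul_of_nonneg_right (le_max_right _ _) (rpow_nonneg (by positivity) _)

-- extra helper: full-sum version
lemma full_tsum {s L : ℝ} (hs : 0 < s) (hL : 0 ≤ L)
    {a : ℕ → ℝ} (ha0 : ∀ i, 0 ≤ a i)
    (hb : ∀ i, a i ≤ L * ((i:ℝ) + 1) ^ (-s - 1)) :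
    ∑' i, a i ≤ L + L / s := by
  set g : ℕ → ℝ := fun j => ((max j 1 : ℕ) : ℝ) ^ (-s) with hg
  have hterm : ∀ i, a i ≤ (if i = 0 then L else 0) + L / s * (g i - g (i + 1)) := by
    intro i
    rcases Nat.eq_zero_or_pos i with rfl | h
    · have hgg : g 0 = g 1 := by simp [hg]
      rw [if_pos rfl, hgg, sub_self, mul_zero, add_zero]
      calc a 0 ≤ L * (((0:ℕ):ℝ) + 1) ^ (-s - 1) := hb 0
        _ = L := by norm_num
    · have h1 : max i 1 = i := max_eq_left h
      have h2 : max (i+1) 1 = i + 1 := max_eq_left (by omega)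
      have hx : (1:ℝ) ≤ (i:ℝ) := by exact_mod_cast h
      have hbern := bern_tail hs hx
      rw [if_neg (by omega), zero_add]
      have hgg1 : g i = (i:ℝ) ^ (-s) := by simp only [hg, h1]
      have hgg2 : g (i+1) = ((i:ℝ) + 1) ^ (-s) := by simp only [hg, h2]; push_cast; ring_nf
      rw [hgg1, hgg2]
      calc a i ≤ L * ((i:ℝ) + 1) ^ (-s - 1) := hb i
        _ = L / s * (s * ((i:ℝ) + 1) ^ (-s - 1)) := by field_simp
        _ ≤ L / s * ((i:ℝ) ^ (-s) - ((i:ℝ) + 1) ^ (-s)) :=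
            mul_le_mul_of_nonneg_left hbern (by positivity)
  apply Real.tsum_le_of_sum_range_le ha0
  intro n
  calc ∑ i ∈ Finset.range n, a i
      ≤ ∑ i ∈ Finset.range n, ((if i = 0 then L else 0) + L / s * (g i - g (i+1))) :=
        Finset.sum_le_sum fun i _ => hterm i
    _ = (∑ i ∈ Finset.range n, (if i = 0 then L else 0))
        + L / s * (g 0 - g n) := by
        rw [Finset.sum_add_distrib, ← Finset.mul_sum, Finset.sum_range_sub' g n]
    _ ≤ L + L / s * g 0 := by
        have h1 : (0:ℝ) ≤ g n := rpow_nonneg (by positivity) _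
        have h2 : (∑ i ∈ Finset.range n, (if i = 0 then L else 0)) ≤ L := by
          rw [Finset.sum_ite_eq' (Finset.range n) 0 (fun _ => L)]
          split <;> simp [hL]
        have h3 : (0:ℝ) ≤ L / s := div_nonneg hL hs.le
        nlinarith
    _ ≤ L + L / s := by
        have : g 0 ≤ 1 := by
          simp only [hg]
          norm_num
        have h3 : (0:ℝ) ≤ L / s := div_nonneg hL hs.le
        nlinarith

set_option maxHeartbeats 1000000 in
/-- If `θ₀` lies in the hyperrectangle `H_∞(β,L)` (coordinates indexed from 1)
with `0 < β < α + 1/2`, then for every `ε ∈ (0,1)`,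
`inf{τ²‖h‖²_{H^{α,τ}} : ‖h−θ₀‖₂ ≤ ε} ≤ C L^{(2α+1)/(2β)} ε^{-(2α-2β+1)/β}/(2α+1-2β)`,
with a constant `C` depending only on `α, β`. -/
theorem stmt_6 (α β : ℝ) (hα : 0 < α) (hβ : 0 < β) (hβα : β < α + 1 / 2) :
    ∃ C : ℝ, 0 < C ∧
      ∀ (L ε : ℝ), 0 < L → 0 < ε → ε < 1 →
      ∀ θ₀ : ℕ → ℝ, (∀ i : ℕ, θ₀ i ^ 2 ≤ L * ((i : ℝ) + 1) ^ (-2 * β - 1)) →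
        sInf {r : ℝ | ∃ h : ℕ → ℝ,
              Real.sqrt (∑' i : ℕ, (h i - θ₀ i) ^ 2) ≤ ε ∧
              r = ∑' i : ℕ, ((i : ℝ) + 1) ^ (2 * α + 1) * h i ^ 2}
          ≤ C * L ^ ((2 * α + 1) / (2 * β)) * ε ^ (-(2 * α - 2 * β + 1) / β)
              / (2 * α + 1 - 2 * β) := by
  have h2β : (0:ℝ) < 2 * β := by linarith
  have hppos : (0:ℝ) < 2 * α - 2 * β + 1 := by linarith
  refine ⟨(2 * α - 2 * β + 1) * max 1 (1 / (2 * α - 2 * β + 1)) *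
      (((2 * β + 1) / (2 * β)) ^ ((2 * α - 2 * β + 1) / (2 * β)) +
        (1 + (2 * β + 1) ^ (1 / (2 * β))) ^ (2 * α - 2 * β + 1) *
          (2 * β) ^ (-((2 * α - 2 * β + 1) / (2 * β)))), ?_, ?_⟩
  · have hK : (0:ℝ) < max 1 (1 / (2 * α - 2 * β + 1)) :=
      lt_of_lt_of_le one_pos (le_max_left _ _)
    have hA1 : (0:ℝ) < ((2 * β + 1) / (2 * β)) ^ ((2 * α - 2 * β + 1) / (2 * β)) :=
      rpow_pos_of_pos (by positivity) _
    have hA2 : (0:ℝ) < (1 + (2 * β + 1) ^ (1 / (2 * β))) ^ (2 * α - 2 * β + 1) *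
        (2 * β) ^ (-((2 * α - 2 * β + 1) / (2 * β))) :=
      mul_pos (rpow_pos_of_pos (by positivity) _) (rpow_pos_of_pos h2β _)
    exact mul_pos (mul_pos hppos hK) (by linarith)
  intro L ε hL hε hε1 θ₀ hθ
  set p := 2 * α - 2 * β + 1 with hp
  set K := max 1 (1 / p) with hK
  set w := (2 * β + 1) ^ (1 / (2 * β)) with hw
  set A1 := ((2 * β + 1) / (2 * β)) ^ (p / (2 * β)) with hA1
  set A2 := (1 + w) ^ p * (2 * β) ^ (-(p / (2 * β))) with hA2
  set S : Set ℝ := {r : ℝ | ∃ h : ℕ → ℝ,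
      Real.sqrt (∑' i : ℕ, (h i - θ₀ i) ^ 2) ≤ ε ∧
      r = ∑' i : ℕ, ((i : ℝ) + 1) ^ (2 * α + 1) * h i ^ 2} with hS
  have hKpos : (0:ℝ) < K := lt_of_lt_of_le one_pos (le_max_left _ _)
  have hA1pos : (0:ℝ) < A1 := rpow_pos_of_pos (by positivity) _
  have hwpos : (0:ℝ) < w := rpow_pos_of_pos (by positivity) _
  have hA2pos : (0:ℝ) < A2 := by
    rw [hA2]
    exact mul_pos (rpow_pos_of_pos (by positivity) _) (rpow_pos_of_pos h2β _)
  have hden : 2 * α + 1 - 2 * β = p := by rw [hp]; ring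
  have hgoal : p * K * (A1 + A2) * L ^ ((2 * α + 1) / (2 * β)) * ε ^ (-p / β)
      / (2 * α + 1 - 2 * β)
      = K * (A1 + A2) * (L ^ ((2 * α + 1) / (2 * β)) * ε ^ (-p / β)) := by
    rw [hden]
    field_simp [hppos.ne']
  rw [hgoal]
  have bddS : BddBelow S := by
    refine ⟨0, fun r hr => ?_⟩
    obtain ⟨h, -, rfl⟩ := hr
    exact tsum_nonneg fun i => mul_nonneg (rpow_nonneg (by positivity) _) (sq_nonneg _)
  have hθ' : ∀ i : ℕ, θ₀ i ^ 2 ≤ L * ((i:ℝ) + 1) ^ (-(2*β) - 1) := by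
    intro i
    have e : (-(2*β) - 1 : ℝ) = -2 * β - 1 := by ring
    rw [e]; exact hθ i
  have key : ∀ N : ℕ, 1 ≤ N → L * (N:ℝ) ^ (-(2*β)) / (2*β) ≤ ε ^ 2 →
      sInf S ≤ L * (K * (N:ℝ) ^ p) := by
    intro N hN1 htail
    set h : ℕ → ℝ := fun i => if i < N then θ₀ i else 0 with hh
    have hmem : (∑' i : ℕ, ((i : ℝ) + 1) ^ (2 * α + 1) * h i ^ 2) ∈ S := by
      refine ⟨h, ?_, rfl⟩
      have htsum : ∑' i : ℕ, (h i - θ₀ i) ^ 2 ≤ ε ^ 2 := by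
        refine le_trans (tail_tsum h2β hL.le hN1 (a := fun i => (h i - θ₀ i)^2)
          (fun i => sq_nonneg _) (fun i hi => ?_) (fun i hi => ?_)) htail
        · show (h i - θ₀ i) ^ 2 = 0
          have : h i = θ₀ i := by rw [hh]; simp [hi]
          rw [this, sub_self]
          norm_num
        · show (h i - θ₀ i) ^ 2 ≤ L * ((i:ℝ) + 1) ^ (-(2*β) - 1)
          have hz : h i = 0 := by rw [hh]; simp [Nat.not_lt.mpr hi]
          rw [hz, zero_sub, neg_sq]
          exact hθ' i
      calc Real.sqrt (∑' i : ℕ, (h i - θ₀ i) ^ 2) ≤ Real.sqrt (ε ^ 2) :=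
            Real.sqrt_le_sqrt htsum
        _ = ε := Real.sqrt_sq hε.le
    have hval : (∑' i : ℕ, ((i : ℝ) + 1) ^ (2 * α + 1) * h i ^ 2)
        ≤ L * (K * (N:ℝ) ^ p) := by
      rw [tsum_eq_sum (s := Finset.range N)
        (f := fun i : ℕ => ((i : ℝ) + 1) ^ (2 * α + 1) * h i ^ 2)
        (fun i hi => by
          have hni : ¬ i < N := by simpa using hi
          show ((i : ℝ) + 1) ^ (2 * α + 1) * h i ^ 2 = 0
          have hz : h i = 0 := by rw [hh]; simp [hni]
          rw [hz]
          norm_num)]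
      calc ∑ i ∈ Finset.range N, ((i : ℝ) + 1) ^ (2 * α + 1) * h i ^ 2
          ≤ ∑ i ∈ Finset.range N, L * ((i:ℝ) + 1) ^ (2*α - 2*β) := by
            apply Finset.sum_le_sum
            intro i hi
            have hi' : i < N := Finset.mem_range.mp hi
            have hb : h i = θ₀ i := by rw [hh]; simp [hi']
            rw [hb]
            have hbase : (0:ℝ) < (i:ℝ) + 1 := by positivity
            calc ((i:ℝ)+1)^(2*α+1) * θ₀ i^2
                ≤ ((i:ℝ)+1)^(2*α+1) * (L * ((i:ℝ)+1)^(-(2*β)-1)) :=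
                  mul_le_mul_of_nonneg_left (hθ' i) (rpow_nonneg hbase.le _)
              _ = L * (((i:ℝ)+1)^(2*α+1) * ((i:ℝ)+1)^(-(2*β)-1)) := by ring
              _ = L * ((i:ℝ)+1)^(2*α - 2*β) := by
                  rw [← rpow_add hbase, show 2*α+1 + (-(2*β)-1) = 2*α - 2*β from by ring]
        _ = L * ∑ i ∈ Finset.range N, ((i:ℝ) + 1) ^ (2*α - 2*β) := by
            rw [Finset.mul_sum]
        _ ≤ L * (K * (N:ℝ) ^ p) := by
            apply mul_le_mul_of_nonneg_left _ hL.le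
            exact head_sum (by linarith) N
    exact (csInf_le bddS hmem).trans hval
  rcases le_or_gt (L * (2*β+1) / (2*β)) (ε ^ 2) with hcase | hcase
  · -- small L : take h = 0
    have hmem0 : (0:ℝ) ∈ S := by
      refine ⟨fun _ => 0, ?_, by simp⟩
      have htsum : ∑' i : ℕ, ((fun _ => (0:ℝ)) i - θ₀ i) ^ 2 ≤ ε ^ 2 := by
        have h0 := full_tsum h2β hL.le (a := fun i => ((0:ℝ) - θ₀ i)^2)
          (fun i => sq_nonneg _) (fun i => by
            show ((0:ℝ) - θ₀ i)^2 ≤ L * ((i:ℝ) + 1) ^ (-(2*β) - 1)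
            rw [zero_sub, neg_sq]; exact hθ' i)
        have e : L + L / (2*β) = L * (2*β+1) / (2*β) := by field_simp
        rw [e] at h0
        exact h0.trans hcase
      calc Real.sqrt (∑' i : ℕ, ((fun _ => (0:ℝ)) i - θ₀ i) ^ 2) ≤ Real.sqrt (ε ^ 2) :=
            Real.sqrt_le_sqrt htsum
        _ = ε := Real.sqrt_sq hε.le
    refine (csInf_le bddS hmem0).trans ?_
    have h1 : (0:ℝ) ≤ A1 + A2 := by linarith
    have h2 : (0:ℝ) ≤ L ^ ((2 * α + 1) / (2 * β)) * ε ^ (-p / β) :=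
      mul_nonneg (rpow_nonneg hL.le _) (rpow_nonneg hε.le _)
    exact mul_nonneg (mul_nonneg hKpos.le h1) h2
  · -- main case
    set X := L / (2 * β * ε ^ 2) with hX
    have hXpos : 0 < X := by rw [hX]; positivity
    set M := X ^ (1 / (2*β)) with hM
    have hMpos : 0 < M := rpow_pos_of_pos hXpos _
    set N := ⌈M⌉₊ with hN
    have hN1 : 1 ≤ N := Nat.one_le_ceil_iff.mpr hMpos
    have hMN : M ≤ (N:ℝ) := Nat.le_ceil M
    have hMs : M ^ (-(2*β)) = X⁻¹ := by
      rw [hM, ← rpow_mul hXpos.le,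
        show (1/(2*β)) * (-(2*β)) = -1 from by field_simp, rpow_neg_one]
    have htail : L * (N:ℝ) ^ (-(2*β)) / (2*β) ≤ ε ^ 2 := by
      have h1 : (N:ℝ) ^ (-(2*β)) ≤ M ^ (-(2*β)) :=
        rpow_le_rpow_of_nonpos hMpos hMN (by linarith)
      have h2 : L * M ^ (-(2*β)) / (2*β) = ε ^ 2 := by
        rw [hMs, hX]
        field_simp
      calc L * (N:ℝ) ^ (-(2*β)) / (2*β) ≤ L * M ^ (-(2*β)) / (2*β) := by
            gcongr
        _ = ε ^ 2 := h2
    have hXw : 1 < X * (2*β+1) := by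
      rw [hX, div_mul_eq_mul_div, lt_div_iff₀ (by positivity)]
      have hc' := (lt_div_iff₀ h2β).mp hcase
      nlinarith
    have h1Mw : 1 < M * w := by
      have h0 : (1:ℝ) < (X * (2*β+1)) ^ (1/(2*β)) :=
        (one_lt_rpow_iff_of_pos (by positivity)).mpr (Or.inl ⟨hXw, by positivity⟩)
      rwa [mul_rpow hXpos.le (by positivity), ← hM, ← hw] at h0
    have hNcM : (N:ℝ) ≤ (1 + w) * M := by
      have h1 : (N:ℝ) < M + 1 := Nat.ceil_lt_add_one hMpos.le
      nlinarith
    have hNp : (N:ℝ) ^ p ≤ (1 + w) ^ p * M ^ p := by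
      rw [← mul_rpow (by positivity) hMpos.le]
      exact rpow_le_rpow (Nat.cast_nonneg N) hNcM hppos.le
    have heps : (ε ^ 2 : ℝ) ^ (p/(2*β)) = ε ^ (p/β) := by
      rw [← rpow_natCast ε 2, ← rpow_mul hε.le]
      congr 1
      push_cast
      field_simp
    have hMp : M ^ p = L ^ (p/(2*β)) / ((2*β) ^ (p/(2*β)) * ε ^ (p/β)) := by
      rw [hM, ← rpow_mul hXpos.le, show (1/(2*β)) * p = p/(2*β) from by ring, hX,
        div_rpow hL.le (by positivity), mul_rpow h2β.le (by positivity), heps]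
    have hLu : L ^ ((2*α+1)/(2*β)) = L * L ^ (p/(2*β)) := by
      rw [show (2*α+1)/(2*β) = 1 + p/(2*β) from by rw [hp]; field_simp; ring,
        rpow_add hL, rpow_one]
    have hev : ε ^ (-p/β) = (ε ^ (p/β))⁻¹ := by
      rw [neg_div, rpow_neg hε.le]
    refine (key N hN1 htail).trans ?_
    calc L * (K * (N:ℝ)^p) ≤ L * (K * ((1+w)^p * M^p)) := by
          exact mul_le_mul_of_nonneg_left (mul_le_mul_of_nonneg_left hNp hKpos.le) hL.le
      _ ≤ K * (A1 + A2) * (L ^ ((2*α+1)/(2*β)) * ε ^ (-p/β)) := by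
          rw [hMp, hLu, hev, hA2, rpow_neg h2β.le]
          have ha : (0:ℝ) < L ^ (p/(2*β)) := rpow_pos_of_pos hL _
          have hbp : (0:ℝ) < (2*β) ^ (p/(2*β)) := rpow_pos_of_pos h2β _
          have hcp : (0:ℝ) < ε ^ (p/β) := rpow_pos_of_pos hε _
          have hwp : (0:ℝ) < (1+w) ^ p := rpow_pos_of_pos (by positivity) _
          have heq : L * (K * ((1+w)^p * (L ^ (p/(2*β)) / ((2*β) ^ (p/(2*β)) * ε ^ (p/β)))))
              = K * ((1+w)^p * ((2*β) ^ (p/(2*β)))⁻¹) * (L * L ^ (p/(2*β)) * (ε ^ (p/β))⁻¹) := by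
            field_simp
          rw [heq, show K * (A1 + (1+w)^p * ((2*β) ^ (p/(2*β)))⁻¹)
              * (L * L ^ (p/(2*β)) * (ε ^ (p/β))⁻¹)
              = K * ((1+w)^p * ((2*β) ^ (p/(2*β)))⁻¹) * (L * L ^ (p/(2*β)) * (ε ^ (p/β))⁻¹)
                + K * A1 * (L * L ^ (p/(2*β)) * (ε ^ (p/β))⁻¹) from by ring]
          have hplus : (0:ℝ) ≤ K * A1 * (L * L ^ (p/(2*β)) * (ε ^ (p/β))⁻¹) := by positivity
          linarith
end

section
/- Let f_θ(x) = exp(∑_{j≥1} θ_j φ_j(x) − c(θ)) on [0,1] with (φ_j) an orthonormal system bounded by ‖φ‖_∞, and f₀ = f_{θ₀}. If ‖θ − θ₀‖₁ < ∞, then the Kullback–Leibler divergence satisfies K(f₀, f_θ) ≤ ‖f₀‖_∞ · e^{‖φ‖_∞ ‖θ−θ₀‖₁} · ‖θ − θ₀‖₂². -/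
open MeasureTheory Real Set

noncomputable section

/-- `∑_j θ_j φ_j(x)` -/
def linSum (φ : ℕ → ℝ → ℝ) (θ : ℕ → ℝ) (x : ℝ) : ℝ := ∑' j : ℕ, θ j * φ j x

/-- normalizing constant `c(θ)` of the log-linear density model. -/
def cConst (φ : ℕ → ℝ → ℝ) (θ : ℕ → ℝ) : ℝ :=
  Real.log (∫ x in Set.Icc (0 : ℝ) 1, Real.exp (linSum φ θ x))

/-- the density `f_θ = exp(∑_j θ_j φ_j − c(θ))`. -/
def fdens (φ : ℕ → ℝ → ℝ) (θ : ℕ → ℝ) (x : ℝ) : ℝ :=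
  Real.exp (linSum φ θ x - cConst φ θ)

open Filter

lemma exp_sub_one_sub_le (t : ℝ) : Real.exp t - 1 - t ≤ t ^ 2 * Real.exp |t| := by
  rcases le_or_gt 0 t with ht | ht
  · rw [abs_of_nonneg ht]
    rcases le_or_gt 1 t with h1 | h1
    · nlinarith [Real.exp_pos t, mul_nonneg (Real.exp_pos t).le (by nlinarith : (0:ℝ) ≤ t ^ 2 - 1)]
    · have h2 : 1 - t ≤ Real.exp (-t) := by linarith [Real.add_one_le_exp (-t)]
      have h3 : Real.exp t * (1 - t) ≤ 1 := by
        have h4 : Real.exp t * Real.exp (-t) = 1 := by rw [← Real.exp_add]; simp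
        nlinarith [Real.exp_pos t]
      nlinarith [Real.exp_pos t]
  · rw [abs_of_neg ht]
    have h2 : 1 - t ≤ Real.exp (-t) := by linarith [Real.add_one_le_exp (-t)]
    have h4 : Real.exp t * Real.exp (-t) = 1 := by rw [← Real.exp_add]; simp
    have h5 : Real.exp t * (1 - t) ≤ 1 := by nlinarith [Real.exp_pos t]
    nlinarith [Real.exp_pos t, Real.exp_pos (-t), sq_nonneg t, sq_nonneg (1 - t),
      mul_nonneg (sq_nonneg t) (Real.exp_pos (-t)).le]

variable {φ : ℕ → ℝ → ℝ} {Mφ : ℝ}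

lemma summable_norm_term (hφ_bdd : ∀ j x, |φ j x| ≤ Mφ) {η : ℕ → ℝ}
    (hη : Summable fun j => |η j|) (x : ℝ) :
    Summable fun j => ‖η j * φ j x‖ := by
  apply Summable.of_nonneg_of_le (fun j => norm_nonneg _) (fun j => ?_) (hη.mul_right Mφ)
  rw [Real.norm_eq_abs, abs_mul]
  exact mul_le_mul_of_nonneg_left (hφ_bdd j x) (abs_nonneg _)

lemma linSum_abs_le (hφ_bdd : ∀ j x, |φ j x| ≤ Mφ) {η : ℕ → ℝ}
    (hη : Summable fun j => |η j|) (x : ℝ) :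
    |linSum φ η x| ≤ Mφ * ∑' j, |η j| := by
  have h1 := norm_tsum_le_tsum_norm (summable_norm_term hφ_bdd hη x)
  rw [Real.norm_eq_abs] at h1
  refine h1.trans ?_
  have h2 : ∀ j, ‖η j * φ j x‖ ≤ |η j| * Mφ := fun j => by
    rw [Real.norm_eq_abs, abs_mul]
    exact mul_le_mul_of_nonneg_left (hφ_bdd j x) (abs_nonneg _)
  calc ∑' j, ‖η j * φ j x‖ ≤ ∑' j, |η j| * Mφ :=
        Summable.tsum_le_tsum h2 (summable_norm_term hφ_bdd hη x) (hη.mul_right Mφ)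
    _ = Mφ * ∑' j, |η j| := by rw [tsum_mul_right, mul_comm]

lemma linSum_meas (hφ_meas : ∀ j, Measurable (φ j)) (hφ_bdd : ∀ j x, |φ j x| ≤ Mφ)
    {η : ℕ → ℝ} (hη : Summable fun j => |η j|) :
    Measurable (linSum φ η) := by
  apply measurable_of_tendsto_metrizable' atTop
    (f := fun n x => ∑ j ∈ Finset.range n, η j * φ j x)
    (fun n => Finset.measurable_sum (Finset.range n) fun j _ =>
      (measurable_const.mul (hφ_meas j)))
  rw [tendsto_pi_nhds]
  intro x
  exact ((summable_norm_term hφ_bdd hη x).of_norm).hasSum.tendsto_sum_nat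

lemma intOn_of_bdd {f : ℝ → ℝ} (hm : Measurable f) {C : ℝ} (hC : ∀ x, |f x| ≤ C) :
    IntegrableOn f (Icc (0:ℝ) 1) := by
  haveI : IsFiniteMeasure (volume.restrict (Icc (0:ℝ) 1)) := by
    constructor
    rw [Measure.restrict_apply_univ, Real.volume_Icc]
    simp
  exact Integrable.mono' (integrable_const C) hm.aestronglyMeasurable
    (ae_of_all _ (by simpa [Real.norm_eq_abs] using hC))

lemma setIntegral_const_Icc (c : ℝ) : ∫ _x in Icc (0:ℝ) 1, c = c := by
  rw [setIntegral_const, Real.volume_real_Icc]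
  norm_num

set_option maxHeartbeats 1000000 in
lemma parseval_aux (hMφ : 0 ≤ Mφ) (hφ_meas : ∀ j, Measurable (φ j))
    (hφ_bdd : ∀ j x, |φ j x| ≤ Mφ)
    (hφ_on : ∀ i j : ℕ, (∫ x in Set.Icc (0 : ℝ) 1, φ i x * φ j x) = if i = j then 1 else 0)
    {η : ℕ → ℝ} (hη : Summable fun j => |η j|) :
    ∫ x in Icc (0:ℝ) 1, (linSum φ η x) ^ 2 = ∑' j, (η j) ^ 2 := by
  have habs : Summable fun j => ‖|η j|‖ := by simpa [Real.norm_eq_abs] using hη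
  have hF : ∀ x, (linSum φ η x) ^ 2
      = ∑' p : ℕ × ℕ, (η p.1 * φ p.1 x) * (η p.2 * φ p.2 x) := by
    intro x
    rw [sq, linSum]
    exact tsum_mul_tsum_of_summable_norm (summable_norm_term hφ_bdd hη x)
      (summable_norm_term hφ_bdd hη x)
  simp only [hF]
  rw [integral_tsum (f := fun (p : ℕ × ℕ) (x : ℝ) => (η p.1 * φ p.1 x) * (η p.2 * φ p.2 x))
    (fun p => (((measurable_const.mul (hφ_meas p.1)).mul
      (measurable_const.mul (hφ_meas p.2))).aestronglyMeasurable)) ?_]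
  · have hint : ∀ p : ℕ × ℕ,
        (∫ x in Icc (0:ℝ) 1, (η p.1 * φ p.1 x) * (η p.2 * φ p.2 x))
          = η p.1 * η p.2 * (if p.1 = p.2 then 1 else 0) := by
      intro p
      have : ∀ x, (η p.1 * φ p.1 x) * (η p.2 * φ p.2 x)
          = (η p.1 * η p.2) * (φ p.1 x * φ p.2 x) := fun x => by ring
      simp only [this]
      rw [integral_const_mul, hφ_on p.1 p.2]
    simp only [hint]
    have hsum2 : Summable fun p : ℕ × ℕ => η p.1 * η p.2 * (if p.1 = p.2 then 1 else 0) := by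
      apply Summable.of_norm_bounded
        (summable_mul_of_summable_norm (f := fun i => |η i|) (g := fun j => |η j|) habs habs)
      intro p
      rw [Real.norm_eq_abs]
      rcases eq_or_ne p.1 p.2 with h | h
      · simp [h, abs_mul, abs_abs, le_refl]
      · simp [h, abs_nonneg, mul_nonneg]
    rw [Summable.tsum_prod hsum2]
    refine tsum_congr fun i => ?_
    have : (fun j => η i * η j * (if i = j then 1 else 0))
        = fun j => if j = i then η i ^ 2 else 0 := by
      funext j
      rcases eq_or_ne j i with h | h
      · simp [h, sq]
      · simp [h, Ne.symm h]
    rw [this, tsum_ite_eq]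
  · have hcoe : ∀ p : ℕ × ℕ,
        ((‖η p.1 * η p.2‖₊ * (Mφ.toNNReal) ^ 2 : NNReal) : ℝ) = |η p.1 * η p.2| * Mφ ^ 2 := by
      intro p
      rw [NNReal.coe_mul, NNReal.coe_pow, coe_nnnorm, Real.coe_toNNReal _ hMφ,
        Real.norm_eq_abs]
    have hμ : (volume.restrict (Icc (0:ℝ) 1)) Set.univ = 1 := by
      rw [Measure.restrict_apply_univ, Real.volume_Icc]
      norm_num
    have hcs : Summable (fun p : ℕ × ℕ => ‖η p.1 * η p.2‖₊ * (Mφ.toNNReal) ^ 2) := by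
      rw [← NNReal.summable_coe]
      have h2 : ∀ p : ℕ × ℕ,
          ((‖η p.1 * η p.2‖₊ * (Mφ.toNNReal) ^ 2 : NNReal) : ℝ)
            = |η p.1| * (|η p.2| * Mφ ^ 2) := by
        intro p
        rw [hcoe p, abs_mul]
        ring
      simp only [h2]
      exact summable_mul_of_summable_norm (f := fun i => |η i|)
        (g := fun j => |η j| * Mφ^2) habs
        (by simpa [Real.norm_eq_abs] using hη.mul_right (Mφ^2))
    have hb : (∑' p : ℕ × ℕ,
        ((‖η p.1 * η p.2‖₊ * (Mφ.toNNReal) ^ 2 : NNReal) : ENNReal)) ≠ ⊤ :=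
      ENNReal.tsum_coe_ne_top_iff_summable.2 hcs
    refine ne_top_of_le_ne_top hb (ENNReal.tsum_le_tsum fun p => ?_)
    calc ∫⁻ x, ‖(η p.1 * φ p.1 x) * (η p.2 * φ p.2 x)‖₊ ∂(volume.restrict (Icc (0:ℝ) 1))
        ≤ ∫⁻ _x, ((‖η p.1 * η p.2‖₊ * (Mφ.toNNReal) ^ 2 : NNReal) : ENNReal)
            ∂(volume.restrict (Icc (0:ℝ) 1)) := by
          apply lintegral_mono
          intro x
          rw [ENNReal.coe_le_coe, ← NNReal.coe_le_coe, coe_nnnorm, Real.norm_eq_abs]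
          rw [hcoe p, abs_mul, abs_mul, abs_mul]
          calc |η p.1| * |φ p.1 x| * (|η p.2| * |φ p.2 x|)
              ≤ |η p.1| * Mφ * (|η p.2| * Mφ) := by
                apply mul_le_mul
                · exact mul_le_mul_of_nonneg_left (hφ_bdd p.1 x) (abs_nonneg _)
                · exact mul_le_mul_of_nonneg_left (hφ_bdd p.2 x) (abs_nonneg _)
                · positivity
                · positivity
            _ = |η p.1| * |η p.2| * Mφ ^ 2 := by ring
            _ = |η p.1 * η p.2| * Mφ ^ 2 := by rw [abs_mul]
      _ = _ := by rw [lintegral_const, hμ, mul_one]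

/-- In the infinite-dimensional exponential family on `[0,1]` with a uniformly
bounded orthonormal system `(φ_j)`, if `‖θ − θ₀‖₁ < ∞` then
`K(f₀, f_θ) ≤ ‖f₀‖_∞ e^{‖φ‖_∞ ‖θ−θ₀‖₁} ‖θ−θ₀‖₂²`. -/
theorem stmt_8 (φ : ℕ → ℝ → ℝ) (Mφ : ℝ) (hMφ : 0 ≤ Mφ)
    (hφ_meas : ∀ j, Measurable (φ j))
    (hφ_bdd : ∀ j x, |φ j x| ≤ Mφ)
    (hφ_on : ∀ i j : ℕ,
      (∫ x in Set.Icc (0 : ℝ) 1, φ i x * φ j x) = if i = j then 1 else 0)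
    (θ θ₀ : ℕ → ℝ)
    (hθ₀ : Summable fun j => |θ₀ j|)
    (hθ : Summable fun j => |θ j - θ₀ j|) :
    (∫ x in Set.Icc (0 : ℝ) 1,
        fdens φ θ₀ x * Real.log (fdens φ θ₀ x / fdens φ θ x))
      ≤ sSup (fdens φ θ₀ '' Set.Icc (0 : ℝ) 1) *
          Real.exp (Mφ * ∑' j : ℕ, |θ j - θ₀ j|) *
          ∑' j : ℕ, (θ j - θ₀ j) ^ 2 := by
  set A := ∑' j : ℕ, |θ j - θ₀ j| with hA
  set T₀ := ∑' j : ℕ, |θ₀ j| with hT₀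
  set S := sSup (fdens φ θ₀ '' Set.Icc (0 : ℝ) 1) with hS
  set D : ℝ → ℝ := linSum φ (fun j => θ j - θ₀ j) with hD
  have hA0 : 0 ≤ A := tsum_nonneg fun j => abs_nonneg _
  have hBg : ∀ x, |linSum φ θ₀ x| ≤ Mφ * T₀ := fun x => linSum_abs_le hφ_bdd hθ₀ x
  have hBD : ∀ x, |D x| ≤ Mφ * A := fun x => linSum_abs_le hφ_bdd hθ x
  have hθ1 : Summable fun j => |θ j| := by
    apply Summable.of_nonneg_of_le (fun j => abs_nonneg _) (fun j => ?_) (hθ.add hθ₀)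
    calc |θ j| = |(θ j - θ₀ j) + θ₀ j| := by ring_nf
      _ ≤ |θ j - θ₀ j| + |θ₀ j| := abs_add_le _ _
  have hBh : ∀ x, |linSum φ θ x| ≤ Mφ * ∑' j, |θ j| := fun x => linSum_abs_le hφ_bdd hθ1 x
  have hmg : Measurable (linSum φ θ₀) := linSum_meas hφ_meas hφ_bdd hθ₀
  have hmD : Measurable D := linSum_meas hφ_meas hφ_bdd hθ
  have hmh : Measurable (linSum φ θ) := linSum_meas hφ_meas hφ_bdd hθ1
  have hsplit : ∀ x, linSum φ θ x = linSum φ θ₀ x + D x := by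
    intro x
    rw [hD]
    simp only [linSum]
    rw [← Summable.tsum_add ((summable_norm_term hφ_bdd hθ₀ x).of_norm)
      ((summable_norm_term hφ_bdd hθ x).of_norm)]
    exact tsum_congr fun j => by ring
  -- positivity of normalizers
  have hpos : ∀ (η : ℕ → ℝ), Measurable (linSum φ η) → ∀ B, (∀ x, |linSum φ η x| ≤ B) →
      0 < ∫ x in Icc (0:ℝ) 1, Real.exp (linSum φ η x) := by
    intro η hm B hB
    have hint : IntegrableOn (fun x => Real.exp (linSum φ η x)) (Icc (0:ℝ) 1) := by
      apply intOn_of_bdd hm.exp (C := Real.exp B)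
      intro x
      rw [abs_of_nonneg (Real.exp_pos _).le]
      exact Real.exp_le_exp.2 ((abs_le.1 (hB x)).2)
    have h1 : Real.exp (-B) ≤ ∫ x in Icc (0:ℝ) 1, Real.exp (linSum φ η x) := by
      rw [← setIntegral_const_Icc (Real.exp (-B))]
      apply setIntegral_mono_on ?_ hint measurableSet_Icc
      · intro x _
        exact Real.exp_le_exp.2 ((abs_le.1 (hB x)).1)
      · refine integrableOn_const ?_
        rw [Real.volume_Icc]
        exact ENNReal.ofReal_lt_top.ne
    exact lt_of_lt_of_le (Real.exp_pos _) h1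
  have hgpos : 0 < ∫ x in Icc (0:ℝ) 1, Real.exp (linSum φ θ₀ x) := hpos θ₀ hmg _ hBg
  have hhpos : 0 < ∫ x in Icc (0:ℝ) 1, Real.exp (linSum φ θ x) := hpos θ hmh _ hBh
  -- f₀ basics
  have hf0 : ∀ x, fdens φ θ₀ x = Real.exp (linSum φ θ₀ x) * Real.exp (-(cConst φ θ₀)) := by
    intro x
    rw [fdens, sub_eq_add_neg, Real.exp_add]
  have hmf₀ : Measurable (fdens φ θ₀) := by
    have he : fdens φ θ₀ = fun x => Real.exp (linSum φ θ₀ x - cConst φ θ₀) := rfl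
    rw [he]
    exact (hmg.sub measurable_const).exp
  have hBf₀ : ∀ x, |fdens φ θ₀ x| ≤ Real.exp (Mφ * T₀ + |cConst φ θ₀|) := by
    intro x
    rw [fdens, abs_of_nonneg (Real.exp_pos _).le]
    apply Real.exp_le_exp.2
    have := (abs_le.1 (hBg x)).2
    have := neg_abs_le (cConst φ θ₀)
    linarith
  have hf0int : ∫ x in Icc (0:ℝ) 1, fdens φ θ₀ x = 1 := by
    simp only [hf0]
    rw [integral_mul_const, cConst, Real.exp_neg, Real.exp_log hgpos]
    exact mul_inv_cancel₀ (ne_of_gt hgpos)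
  -- integrabilities
  have hIf₀ : IntegrableOn (fdens φ θ₀) (Icc (0:ℝ) 1) := intOn_of_bdd hmf₀ hBf₀
  have hIe : IntegrableOn (fun x => fdens φ θ₀ x * Real.exp (D x)) (Icc (0:ℝ) 1) := by
    apply intOn_of_bdd (hmf₀.mul hmD.exp)
      (C := Real.exp (Mφ * T₀ + |cConst φ θ₀|) * Real.exp (Mφ * A))
    intro x
    rw [Pi.mul_apply, abs_mul, abs_of_nonneg (Real.exp_pos (D x)).le]
    exact mul_le_mul (hBf₀ x) (Real.exp_le_exp.2 ((abs_le.1 (hBD x)).2))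
      (Real.exp_pos _).le (Real.exp_pos _).le
  have hID : IntegrableOn (fun x => fdens φ θ₀ x * D x) (Icc (0:ℝ) 1) := by
    apply intOn_of_bdd (hmf₀.mul hmD)
      (C := Real.exp (Mφ * T₀ + |cConst φ θ₀|) * (Mφ * A))
    intro x
    rw [Pi.mul_apply, abs_mul]
    exact mul_le_mul (hBf₀ x) (hBD x) (abs_nonneg _) (Real.exp_pos _).le
  have hIC : IntegrableOn (fun x => fdens φ θ₀ x * (cConst φ θ - cConst φ θ₀)) (Icc (0:ℝ) 1) := by
    apply intOn_of_bdd (hmf₀.mul measurable_const)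
      (C := Real.exp (Mφ * T₀ + |cConst φ θ₀|) * |cConst φ θ - cConst φ θ₀|)
    intro x
    rw [Pi.mul_apply, abs_mul]
    exact mul_le_mul_of_nonneg_right (hBf₀ x) (abs_nonneg _)
  have hIG : IntegrableOn (fun x => S * Real.exp (Mφ * A) * D x ^ 2) (Icc (0:ℝ) 1) := by
    apply intOn_of_bdd ((measurable_const.mul measurable_const).mul (hmD.pow_const 2))
      (C := |S * Real.exp (Mφ * A)| * (Mφ * A) ^ 2)
    intro x
    show |S * Real.exp (Mφ * A) * D x ^ 2| ≤ _
    rw [abs_mul]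
    apply mul_le_mul_of_nonneg_left ?_ (abs_nonneg _)
    rw [abs_pow]
    exact pow_le_pow_left₀ (abs_nonneg _) (hBD x) 2
  -- the integral I and the constant identity
  have hId : ∀ x, fdens φ θ₀ x * Real.exp (D x)
      = Real.exp (linSum φ θ x) * Real.exp (-(cConst φ θ₀)) := by
    intro x
    rw [hf0 x, hsplit x, Real.exp_add]
    ring
  have hIeq : (∫ x in Icc (0:ℝ) 1, fdens φ θ₀ x * Real.exp (D x))
      = (∫ x in Icc (0:ℝ) 1, Real.exp (linSum φ θ x)) * Real.exp (-(cConst φ θ₀)) := by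
    simp only [hId]
    rw [integral_mul_const]
  have hIpos : 0 < ∫ x in Icc (0:ℝ) 1, fdens φ θ₀ x * Real.exp (D x) := by
    rw [hIeq]
    exact mul_pos hhpos (Real.exp_pos _)
  have hC : cConst φ θ - cConst φ θ₀
      = Real.log (∫ x in Icc (0:ℝ) 1, fdens φ θ₀ x * Real.exp (D x)) := by
    rw [hIeq, Real.log_mul (ne_of_gt hhpos) (ne_of_gt (Real.exp_pos _)), Real.log_exp,
      cConst, cConst]
    ring
  -- sup bound
  have hbddA : BddAbove (fdens φ θ₀ '' Icc (0:ℝ) 1) := by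
    refine ⟨Real.exp (Mφ * T₀ - cConst φ θ₀), ?_⟩
    rintro y ⟨x, -, rfl⟩
    rw [fdens]
    exact Real.exp_le_exp.2 (by linarith [(abs_le.1 (hBg x)).2])
  have hSle : ∀ x ∈ Icc (0:ℝ) 1, fdens φ θ₀ x ≤ S := fun x hx => le_csSup hbddA ⟨x, hx, rfl⟩
  have hlogid : ∀ x, fdens φ θ₀ x * Real.log (fdens φ θ₀ x / fdens φ θ x)
      = fdens φ θ₀ x * (cConst φ θ - cConst φ θ₀) - fdens φ θ₀ x * D x := by
    intro x
    rw [fdens, fdens, ← Real.exp_sub, Real.log_exp, hsplit x]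
    ring
  calc (∫ x in Icc (0:ℝ) 1, fdens φ θ₀ x * Real.log (fdens φ θ₀ x / fdens φ θ x))
      = (∫ x in Icc (0:ℝ) 1,
          (fdens φ θ₀ x * (cConst φ θ - cConst φ θ₀) - fdens φ θ₀ x * D x)) := by
        simp only [hlogid]
    _ = (cConst φ θ - cConst φ θ₀) - ∫ x in Icc (0:ℝ) 1, fdens φ θ₀ x * D x := by
        rw [integral_sub hIC hID, integral_mul_const, hf0int, one_mul]
    _ ≤ ((∫ x in Icc (0:ℝ) 1, fdens φ θ₀ x * Real.exp (D x)) - 1)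
          - ∫ x in Icc (0:ℝ) 1, fdens φ θ₀ x * D x := by
        have h3 := Real.log_le_sub_one_of_pos hIpos
        rw [← hC] at h3
        linarith
    _ = ∫ x in Icc (0:ℝ) 1,
          (fdens φ θ₀ x * Real.exp (D x) - fdens φ θ₀ x - fdens φ θ₀ x * D x) := by
        have e1 : ∫ x in Icc (0:ℝ) 1,
              (fdens φ θ₀ x * Real.exp (D x) - fdens φ θ₀ x - fdens φ θ₀ x * D x)
            = (∫ x in Icc (0:ℝ) 1, (fdens φ θ₀ x * Real.exp (D x) - fdens φ θ₀ x))
              - ∫ x in Icc (0:ℝ) 1, fdens φ θ₀ x * D x := integral_sub (hIe.sub hIf₀) hID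
        have e2 : ∫ x in Icc (0:ℝ) 1, (fdens φ θ₀ x * Real.exp (D x) - fdens φ θ₀ x)
            = (∫ x in Icc (0:ℝ) 1, fdens φ θ₀ x * Real.exp (D x))
              - ∫ x in Icc (0:ℝ) 1, fdens φ θ₀ x := integral_sub hIe hIf₀
        rw [e1, e2, hf0int]
    _ ≤ ∫ x in Icc (0:ℝ) 1, S * Real.exp (Mφ * A) * D x ^ 2 := by
        apply setIntegral_mono_on ((hIe.sub hIf₀).sub hID) hIG measurableSet_Icc
        intro x hx
        have h1 : Real.exp (D x) - 1 - D x ≤ D x ^ 2 * Real.exp (Mφ * A) :=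
          (exp_sub_one_sub_le (D x)).trans
            (mul_le_mul_of_nonneg_left (Real.exp_le_exp.2 (hBD x)) (sq_nonneg _))
        have h2 : 0 ≤ fdens φ θ₀ x := (Real.exp_pos _).le
        have h4 := hSle x hx
        calc fdens φ θ₀ x * Real.exp (D x) - fdens φ θ₀ x - fdens φ θ₀ x * D x
            = fdens φ θ₀ x * (Real.exp (D x) - 1 - D x) := by ring
          _ ≤ fdens φ θ₀ x * (D x ^ 2 * Real.exp (Mφ * A)) := mul_le_mul_of_nonneg_left h1 h2
          _ = fdens φ θ₀ x * Real.exp (Mφ * A) * D x ^ 2 := by ring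
          _ ≤ S * Real.exp (Mφ * A) * D x ^ 2 :=
              mul_le_mul_of_nonneg_right
                (mul_le_mul_of_nonneg_right h4 (Real.exp_pos _).le) (sq_nonneg _)
    _ = S * Real.exp (Mφ * A) * ∑' j : ℕ, (θ j - θ₀ j) ^ 2 := by
        rw [integral_const_mul, hD, parseval_aux hMφ hφ_meas hφ_bdd hφ_on hθ]

end
end

section
/- Let f₀ be a density on [0,1] with 0 < c₀ ≤ f₀ ≤ C₀. For a histogram density f_θ = k∑_{j=1}^k θ_j 1_{I_j} with θ in the k-simplex and I_j = ((j−1)/k, j/k], one has h²(f₀, f_θ) = b(k)² + ∑_{j=1}^k (√θ_j − η̃_j √k)², where η̃_j = ∫_{I_j} √f₀ and b(k)² = ∑_j ∫_{I_j} (√f₀ − η̃_j k)² dx = 1 − k ∑_j η̃_j². In particular h²(f₀, f_θ) ≥ b(k)² for every θ in the simplex. -/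
open MeasureTheory Real Set

noncomputable section


/-- the `j`-th cell `I_j = ((j-1)/k, j/k]` of the regular `k`-grid (here `j : Fin k`
represents the cell with index `j+1`). -/
def cell (k : ℕ) (j : Fin k) : Set ℝ := Set.Ioc ((j : ℝ) / k) (((j : ℝ) + 1) / k)

/-- the histogram density `f_θ = k ∑_j θ_j 1_{I_j}`. -/
def histDens (k : ℕ) (θ : Fin k → ℝ) (x : ℝ) : ℝ :=
  (k : ℝ) * ∑ j : Fin k, (cell k j).indicator (fun _ => θ j) x


lemma cell_meas (k : ℕ) (j : Fin k) : MeasurableSet (cell k j) := measurableSet_Ioc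

lemma cell_subset (k : ℕ) (j : Fin k) : cell k j ⊆ Set.Ioc 0 1 := by
  have hk : (0:ℝ) < k := by exact_mod_cast j.pos
  intro x hx
  obtain ⟨h1, h2⟩ := hx
  constructor
  · exact lt_of_le_of_lt (by positivity) h1
  · refine h2.trans ?_
    rw [div_le_one hk]
    have : (j : ℝ) + 1 ≤ k := by exact_mod_cast j.isLt
    linarith

lemma cell_disjoint (k : ℕ) : Pairwise (Function.onFun Disjoint (cell k)) := by
  have key : ∀ i j : Fin k, (i:ℕ) < (j:ℕ) → Disjoint (cell k i) (cell k j) := by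
    intro i j hij
    have hk : (0:ℝ) < k := by exact_mod_cast i.pos
    rw [cell, cell, Set.Ioc_disjoint_Ioc]
    refine le_trans (min_le_left _ _) (le_trans ?_ (le_max_right _ _))
    have h1 : ((i:ℝ)+1) ≤ (j:ℝ) := by exact_mod_cast hij
    exact div_le_div_of_nonneg_right h1 hk.le
  intro i j hij
  rcases lt_or_gt_of_ne (fun h => hij (Fin.ext h) : (i:ℕ) ≠ (j:ℕ)) with h | h
  · exact key i j h
  · exact (key j i h).symm

lemma iUnion_cell (k : ℕ) (hk : 0 < k) : (⋃ j : Fin k, cell k j) = Set.Ioc 0 1 := by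
  apply Set.Subset.antisymm
  · exact Set.iUnion_subset fun j => cell_subset k j
  · intro x hx
    have hkR : (0:ℝ) < k := by exact_mod_cast hk
    have hxk : (0:ℝ) < x * k := mul_pos hx.1 hkR
    set n := ⌈x * k⌉₊ with hn
    have hn1 : 1 ≤ n := Nat.one_le_ceil_iff.mpr hxk
    have hnk : n ≤ k := by
      apply Nat.ceil_le.mpr
      calc x * k ≤ 1 * k := by nlinarith [hx.2]
        _ = (k:ℝ) := one_mul _
    refine Set.mem_iUnion.mpr ⟨⟨n - 1, by omega⟩, ?_⟩
    have hcast : ((⟨n - 1, by omega⟩ : Fin k) : ℝ) = (n : ℝ) - 1 := by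
      simp only [Fin.val_mk]
      push_cast [Nat.cast_sub hn1]
      ring
    constructor
    · rw [hcast, div_lt_iff₀ hkR]
      have : ((n:ℝ) - 1) < x * k := by
        have := Nat.lt_ceil.mp (show n - 1 < ⌈x * k⌉₊ by omega)
        calc (n:ℝ) - 1 ≤ ((n-1 : ℕ) : ℝ) := by push_cast [Nat.cast_sub hn1]; ring_nf; rfl
          _ < x * k := this
      linarith
    · rw [hcast, le_div_iff₀ hkR]
      have := Nat.le_ceil (x * k)
      linarith

lemma volume_cell (k : ℕ) (j : Fin k) :
    volume (cell k j) = ENNReal.ofReal (1 / k) := by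
  have hk : (0:ℝ) < k := by exact_mod_cast j.pos
  rw [cell, Real.volume_Ioc]
  congr 1
  field_simp
  ring




lemma histDens_on_cell (k : ℕ) (θ : Fin k → ℝ) (j : Fin k) {x : ℝ} (hx : x ∈ cell k j) :
    histDens k θ x = k * θ j := by
  unfold histDens
  congr 1
  rw [Finset.sum_eq_single_of_mem j (Finset.mem_univ j)]
  · simp [Set.indicator_of_mem hx]
  · intro i _ hij
    have hd : Disjoint (cell k i) (cell k j) := cell_disjoint k hij
    have : x ∉ cell k i := fun hxi => (Set.disjoint_left.mp hd hxi) hx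
    simp [Set.indicator_of_notMem this]

lemma histDens_nonneg (k : ℕ) (θ : Fin k → ℝ) (hθ : ∀ j, 0 ≤ θ j) (x : ℝ) :
    0 ≤ histDens k θ x := by
  unfold histDens
  apply mul_nonneg (Nat.cast_nonneg k)
  exact Finset.sum_nonneg fun j _ => Set.indicator_nonneg (fun _ _ => hθ j) x

lemma histDens_le (k : ℕ) (θ : Fin k → ℝ) (hθ : ∀ j, 0 ≤ θ j) (hsum : ∑ j, θ j = 1)
    (x : ℝ) : histDens k θ x ≤ k := by
  unfold histDens
  have h : ∑ j : Fin k, (cell k j).indicator (fun _ => θ j) x ≤ 1 := by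
    rw [← hsum]
    apply Finset.sum_le_sum
    intro j _
    by_cases hx : x ∈ cell k j
    · rw [Set.indicator_of_mem hx]
    · rw [Set.indicator_of_notMem hx]; exact hθ j
  calc (k:ℝ) * _ ≤ (k:ℝ) * 1 := by
        apply mul_le_mul_of_nonneg_left h (Nat.cast_nonneg k)
    _ = k := mul_one _

lemma histDens_meas (k : ℕ) (θ : Fin k → ℝ) : Measurable (histDens k θ) := by
  apply Measurable.const_mul
  exact Finset.measurable_sum _ fun j _ => Measurable.indicator measurable_const (cell_meas k j)

/-- integrability of a bounded measurable function on a subset of `Ioc 0 1`. -/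
lemma integrableOn_of_bound {F : ℝ → ℝ} (hF : Measurable F) {s : Set ℝ}
    (hs : MeasurableSet s)
    (hsub : s ⊆ Set.Ioc 0 1) (M : ℝ) (hM : ∀ x ∈ Set.Ioc (0:ℝ) 1, |F x| ≤ M) :
    IntegrableOn F s volume := by
  apply MeasureTheory.Measure.integrableOn_of_bounded (M := M)
  · have : volume s ≤ volume (Set.Ioc (0:ℝ) 1) := measure_mono hsub
    rw [Real.volume_Ioc] at this
    exact ne_top_of_le_ne_top (by simp) this
  · exact hF.aestronglyMeasurable
  · rw [ae_restrict_iff' hs]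
    filter_upwards with x hx
    exact hM x (hsub hx)



lemma cell_integral_const (k : ℕ) (j : Fin k) (c : ℝ) :
    (∫ _x in cell k j, c) = c / k := by
  have hk : (0:ℝ) < k := by exact_mod_cast j.pos
  rw [MeasureTheory.setIntegral_const, measureReal_def, volume_cell, ENNReal.toReal_ofReal (by positivity)]
  rw [smul_eq_mul]
  ring

/-- expansion of `∫ (g - c)²` over a cell. -/
lemma expand_sq (k : ℕ) (j : Fin k) {g : ℝ → ℝ}
    (hg : IntegrableOn g (cell k j) volume)
    (hg2 : IntegrableOn (fun x => g x ^ 2) (cell k j) volume) (c : ℝ) :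
    (∫ x in cell k j, (g x - c) ^ 2)
      = (∫ x in cell k j, g x ^ 2) - 2 * c * (∫ x in cell k j, g x) + c ^ 2 / k := by
  have h1 : (∫ x in cell k j, (g x - c) ^ 2)
      = ∫ x in cell k j, (g x ^ 2 - (2 * c) * g x + c ^ 2) := by
    apply MeasureTheory.setIntegral_congr_fun (cell_meas k j)
    intro x _
    ring
  have hc : IntegrableOn (fun _ : ℝ => c ^ 2) (cell k j) volume :=
    (integrableOn_const_iff (C := c ^ 2)).mpr (Or.inr (by rw [volume_cell]; exact ENNReal.ofReal_lt_top))
  have hgc : IntegrableOn (fun x => 2 * c * g x) (cell k j) volume := hg.const_mul (2*c)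
  rw [h1]
  have hsub : IntegrableOn (fun x => g x ^ 2 - 2 * c * g x) (cell k j) volume := hg2.sub hgc
  rw [MeasureTheory.integral_add (f := fun x => g x ^ 2 - 2 * c * g x)
      (g := fun _ => c ^ 2) hsub hc,
    MeasureTheory.integral_sub (f := fun x => g x ^ 2) (g := fun x => 2 * c * g x) hg2 hgc,
    MeasureTheory.integral_const_mul, cell_integral_const]




/-- Pythagoras identity for the Hellinger distance between a density
`c₀ ≤ f₀ ≤ C₀` on `[0,1]` and any histogram `f_θ`, `θ` in the `k`-simplex:
`h²(f₀,f_θ) = b(k)² + ∑_j (√θ_j − η̃_j √k)²` with `η̃_j = ∫_{I_j} √f₀` and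
`b(k)² = ∑_j ∫_{I_j}(√f₀ − η̃_j k)² = 1 − k ∑_j η̃_j²`; in particular `h² ≥ b(k)²`. -/
theorem stmt_11 (k : ℕ) (hk : 0 < k) (f₀ : ℝ → ℝ) (hmeas : Measurable f₀)
    (c₀ C₀ : ℝ) (hc₀ : 0 < c₀)
    (hbound : ∀ x ∈ Set.Ioc (0 : ℝ) 1, c₀ ≤ f₀ x ∧ f₀ x ≤ C₀)
    (hprob : (∫ x in Set.Ioc (0 : ℝ) 1, f₀ x) = 1)
    (θ : Fin k → ℝ) (hθ_nonneg : ∀ j, 0 ≤ θ j) (hθ_sum : ∑ j, θ j = 1) :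
    (∫ x in Set.Ioc (0 : ℝ) 1,
        (Real.sqrt (f₀ x) - Real.sqrt (histDens k θ x)) ^ 2)
      = (∑ j : Fin k, ∫ x in cell k j,
            (Real.sqrt (f₀ x) - (∫ y in cell k j, Real.sqrt (f₀ y)) * k) ^ 2)
        + ∑ j : Fin k,
            (Real.sqrt (θ j) - (∫ y in cell k j, Real.sqrt (f₀ y)) * Real.sqrt k) ^ 2 ∧
    (∑ j : Fin k, ∫ x in cell k j,
        (Real.sqrt (f₀ x) - (∫ y in cell k j, Real.sqrt (f₀ y)) * k) ^ 2)
      = 1 - (k : ℝ) * ∑ j : Fin k, (∫ y in cell k j, Real.sqrt (f₀ y)) ^ 2 ∧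
    (∑ j : Fin k, ∫ x in cell k j,
        (Real.sqrt (f₀ x) - (∫ y in cell k j, Real.sqrt (f₀ y)) * k) ^ 2)
      ≤ ∫ x in Set.Ioc (0 : ℝ) 1,
          (Real.sqrt (f₀ x) - Real.sqrt (histDens k θ x)) ^ 2 := by

  have hkR : (0:ℝ) < k := by exact_mod_cast hk
  have hg_meas : Measurable (fun x => Real.sqrt (f₀ x)) := hmeas.sqrt
  have hg_nonneg : ∀ x : ℝ, 0 ≤ Real.sqrt (f₀ x) := fun x => Real.sqrt_nonneg _
  have hg_bd : ∀ x ∈ Set.Ioc (0:ℝ) 1, |Real.sqrt (f₀ x)| ≤ Real.sqrt C₀ := by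
    intro x hx
    rw [abs_of_nonneg (hg_nonneg x)]
    exact Real.sqrt_le_sqrt (hbound x hx).2
  have hg_int : ∀ j, IntegrableOn (fun x => Real.sqrt (f₀ x)) (cell k j) volume :=
    fun j => integrableOn_of_bound hg_meas (cell_meas k j) (cell_subset k j) _ hg_bd
  have hg2_bd : ∀ x ∈ Set.Ioc (0:ℝ) 1, |Real.sqrt (f₀ x) ^ 2| ≤ C₀ := by
    intro x hx
    rw [abs_of_nonneg (sq_nonneg _), Real.sq_sqrt (le_trans hc₀.le (hbound x hx).1)]
    exact (hbound x hx).2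
  have hg2_int : ∀ j, IntegrableOn (fun x => Real.sqrt (f₀ x) ^ 2) (cell k j) volume :=
    fun j => integrableOn_of_bound (hg_meas.pow_const 2) (cell_meas k j)
      (cell_subset k j) _ hg2_bd
  have hg2_int01 : IntegrableOn (fun x => Real.sqrt (f₀ x) ^ 2) (Set.Ioc 0 1) volume :=
    integrableOn_of_bound (hg_meas.pow_const 2) measurableSet_Ioc subset_rfl _ hg2_bd
  -- the full integrand
  have hH_meas : Measurable (fun x => (Real.sqrt (f₀ x) - Real.sqrt (histDens k θ x)) ^ 2) :=
    (hg_meas.sub (histDens_meas k θ).sqrt).pow_const 2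
  have hH_bd : ∀ x ∈ Set.Ioc (0:ℝ) 1,
      |(Real.sqrt (f₀ x) - Real.sqrt (histDens k θ x)) ^ 2|
        ≤ (Real.sqrt C₀ + Real.sqrt k) ^ 2 := by
    intro x hx
    rw [abs_of_nonneg (sq_nonneg _)]
    have h1 : 0 ≤ Real.sqrt (histDens k θ x) := Real.sqrt_nonneg _
    have h2 : Real.sqrt (histDens k θ x) ≤ Real.sqrt k :=
      Real.sqrt_le_sqrt (histDens_le k θ hθ_nonneg hθ_sum x)
    have h3 := hg_bd x hx
    rw [abs_of_nonneg (hg_nonneg x)] at h3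
    have h4 := hg_nonneg x
    nlinarith [Real.sqrt_nonneg C₀, Real.sqrt_nonneg (k:ℝ)]
  have hH_int : IntegrableOn (fun x => (Real.sqrt (f₀ x) - Real.sqrt (histDens k θ x)) ^ 2)
      (Set.Ioc 0 1) volume :=
    integrableOn_of_bound hH_meas measurableSet_Ioc subset_rfl _ hH_bd
  -- split the Hellinger integral over cells
  have hsplit : (∫ x in Set.Ioc (0:ℝ) 1, (Real.sqrt (f₀ x) - Real.sqrt (histDens k θ x)) ^ 2)
      = ∑ j : Fin k, ∫ x in cell k j,
          (Real.sqrt (f₀ x) - Real.sqrt (histDens k θ x)) ^ 2 := by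
    rw [← iUnion_cell k hk,
      MeasureTheory.integral_iUnion (cell_meas k) (cell_disjoint k)
        (by rwa [iUnion_cell k hk]), tsum_fintype]
  -- split the integral of f₀ (as √f₀²) over cells
  have hB : (∑ j : Fin k, ∫ x in cell k j, Real.sqrt (f₀ x) ^ 2) = 1 := by
    have h1 : (∫ x in Set.Ioc (0:ℝ) 1, Real.sqrt (f₀ x) ^ 2)
        = ∑ j : Fin k, ∫ x in cell k j, Real.sqrt (f₀ x) ^ 2 := by
      rw [← iUnion_cell k hk,
        MeasureTheory.integral_iUnion (cell_meas k) (cell_disjoint k)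
          (by rwa [iUnion_cell k hk]), tsum_fintype]
    have h2 : (∫ x in Set.Ioc (0:ℝ) 1, Real.sqrt (f₀ x) ^ 2)
        = ∫ x in Set.Ioc (0:ℝ) 1, f₀ x := by
      apply MeasureTheory.setIntegral_congr_fun measurableSet_Ioc
      intro x hx
      exact Real.sq_sqrt (le_trans hc₀.le (hbound x hx).1)
    rw [← h1, h2, hprob]
  -- per-cell Pythagoras
  have hcell : ∀ j : Fin k,
      (∫ x in cell k j, (Real.sqrt (f₀ x) - Real.sqrt (histDens k θ x)) ^ 2)
        = (∫ x in cell k j,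
            (Real.sqrt (f₀ x) - (∫ y in cell k j, Real.sqrt (f₀ y)) * k) ^ 2)
          + (Real.sqrt (θ j) - (∫ y in cell k j, Real.sqrt (f₀ y)) * Real.sqrt k) ^ 2 := by
    intro j
    set A : ℝ := ∫ y in cell k j, Real.sqrt (f₀ y) with hA
    have h1 : (∫ x in cell k j, (Real.sqrt (f₀ x) - Real.sqrt (histDens k θ x)) ^ 2)
        = ∫ x in cell k j, (Real.sqrt (f₀ x) - Real.sqrt k * Real.sqrt (θ j)) ^ 2 := by
      apply MeasureTheory.setIntegral_congr_fun (cell_meas k j)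
      intro x hx
      dsimp only
      rw [histDens_on_cell k θ j hx, Real.sqrt_mul (Nat.cast_nonneg k)]
    rw [h1, expand_sq k j (hg_int j) (hg2_int j),
      expand_sq k j (hg_int j) (hg2_int j)]
    have e2 : (Real.sqrt (θ j)) ^ 2 = θ j := Real.sq_sqrt (hθ_nonneg j)
    have e3 : (Real.sqrt (k:ℝ)) ^ 2 = (k:ℝ) := Real.sq_sqrt (Nat.cast_nonneg k)
    field_simp
    linear_combination (Real.sqrt (θ j) ^ 2 - A ^ 2 * (k:ℝ)) * e3
  -- per-cell value of the projection error
  have hE2 : ∀ j : Fin k,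
      (∫ x in cell k j, (Real.sqrt (f₀ x) - (∫ y in cell k j, Real.sqrt (f₀ y)) * k) ^ 2)
        = (∫ x in cell k j, Real.sqrt (f₀ x) ^ 2)
          - k * (∫ y in cell k j, Real.sqrt (f₀ y)) ^ 2 := by
    intro j
    rw [expand_sq k j (hg_int j) (hg2_int j)]
    field_simp
    ring
  refine ⟨?_, ?_, ?_⟩
  · rw [hsplit, Finset.sum_congr rfl (fun j _ => hcell j), Finset.sum_add_distrib]
  · rw [Finset.sum_congr rfl (fun j _ => hE2 j), Finset.sum_sub_distrib, hB,
      ← Finset.mul_sum]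
  · rw [hsplit, Finset.sum_congr rfl (fun j _ => hcell j), Finset.sum_add_distrib]
    have : (0:ℝ) ≤ ∑ j : Fin k,
        (Real.sqrt (θ j) - (∫ y in cell k j, Real.sqrt (f₀ y)) * Real.sqrt k) ^ 2 :=
      Finset.sum_nonneg fun j _ => sq_nonneg _
    linarith

end
end

section
/- Let f₀ be a continuous density on [0,1] in the Hölder class H_∞(β,L) with β ∈ (0,1], bounded below by c₀ > 0. Then the Hellinger approximation error by histograms satisfies b(k)² = 1 − k∑_{j=1}^k (∫_{I_j}√f₀)² ≤ C k^{−2β} for a constant C depending on L, β, c₀. -/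
open MeasureTheory Real Set

noncomputable section

lemma cell_subset_s12 (k : ℕ) (hk : 0 < k) (j : Fin k) :
    Set.Icc ((j:ℝ)/k) (((j:ℝ)+1)/k) ⊆ Set.Icc (0:ℝ) 1 := by
  have hk0 : (0:ℝ) < k := Nat.cast_pos.mpr hk
  apply Set.Icc_subset_Icc
  · positivity
  · rw [div_le_one hk0]; exact_mod_cast j.2

lemma cell_key (β L c₀ : ℝ) (hβ0 : 0 < β) (hL : 0 < L) (hc₀ : 0 < c₀)
    (f₀ : ℝ → ℝ) (hcont : ContinuousOn f₀ (Set.Icc (0:ℝ) 1))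
    (hHolder : ∀ x ∈ Set.Icc (0:ℝ) 1, ∀ y ∈ Set.Icc (0:ℝ) 1,
      |f₀ x - f₀ y| ≤ L * |x - y| ^ β)
    (hlb : ∀ x ∈ Set.Icc (0:ℝ) 1, c₀ ≤ f₀ x)
    (k : ℕ) (hk : 0 < k) (j : Fin k) :
    (∫ y in cell k j, f₀ y) - (k:ℝ) * (∫ y in cell k j, Real.sqrt (f₀ y)) ^ 2
      ≤ (L^2/(4*c₀)) * (k:ℝ)^(-2*β) * (1/k) := by
  have hk0 : (0:ℝ) < k := Nat.cast_pos.mpr hk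
  set g : ℝ → ℝ := fun x => Real.sqrt (f₀ x) with hgdef
  set a : ℝ := (j:ℝ)/k with ha
  set b : ℝ := ((j:ℝ)+1)/k with hb
  have hab : a ≤ b := by rw [ha, hb]; gcongr; linarith
  have hcell : cell k j = Set.Ioc a b := rfl
  have hsubI : Set.Icc a b ⊆ Set.Icc (0:ℝ) 1 := cell_subset_s12 k hk j
  have hsub : Set.Ioc a b ⊆ Set.Icc (0:ℝ) 1 := Set.Ioc_subset_Icc_self.trans hsubI
  have hba : b - a = 1/k := by rw [ha, hb]; field_simp; ring
  -- the endpoint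
  have htI : b ∈ Set.Icc (0:ℝ) 1 := hsubI ⟨hab, le_refl b⟩
  set c : ℝ := Real.sqrt (f₀ b) with hc
  -- continuity / integrability
  have hfc : ContinuousOn f₀ (Set.Icc a b) := hcont.mono hsubI
  have hgc : ContinuousOn g (Set.Icc a b) := hfc.sqrt
  have hf_int : IntegrableOn f₀ (Set.Ioc a b) :=
    (hfc.integrableOn_Icc).mono_set Set.Ioc_subset_Icc_self
  have hg_int : IntegrableOn g (Set.Ioc a b) :=
    (hgc.integrableOn_Icc).mono_set Set.Ioc_subset_Icc_self
  have hg2_int : IntegrableOn (fun x => g x ^ 2) (Set.Ioc a b) :=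
    ((hgc.pow 2).integrableOn_Icc).mono_set Set.Ioc_subset_Icc_self
  have hgc2_int : IntegrableOn (fun x => (g x - c) ^ 2) (Set.Ioc a b) :=
    (((hgc.sub continuousOn_const).pow 2).integrableOn_Icc).mono_set Set.Ioc_subset_Icc_self
  have hvol : (volume (Set.Ioc a b)).toReal = 1/k := by
    rw [Real.volume_Ioc, ENNReal.toReal_ofReal (by linarith)]; exact hba
  -- g^2 = f₀ on the cell
  have hg2f : ∫ x in Set.Ioc a b, g x ^ 2 = ∫ x in Set.Ioc a b, f₀ x := by
    apply setIntegral_congr_fun measurableSet_Ioc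
    intro x hx
    exact Real.sq_sqrt (le_trans hc₀.le (hlb x (hsub hx)))
  -- expansion of ∫ (g - c)^2
  have hexp : ∫ x in Set.Ioc a b, (g x - c) ^ 2
      = (∫ x in Set.Ioc a b, f₀ x) - (2*c) * (∫ x in Set.Ioc a b, g x) + c^2 * (1/k) := by
    have hfun : (fun x => (g x - c)^2) = fun x => (g x ^ 2 - (2*c) * g x) + c^2 := by
      funext x; ring
    have i12 : IntegrableOn (fun x => g x ^ 2 - (2*c) * g x) (Set.Ioc a b) :=
      hg2_int.sub (hg_int.const_mul (2*c))
    have i3 : IntegrableOn (fun _ : ℝ => c^2) (Set.Ioc a b) :=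
      (integrableOn_const_iff).mpr (Or.inr (by rw [Real.volume_Ioc]; exact ENNReal.ofReal_lt_top))
    rw [hfun, integral_add i12 i3, integral_sub hg2_int (hg_int.const_mul (2*c)),
      integral_const_mul, hg2f, setIntegral_const, smul_eq_mul, measureReal_def, hvol]
    ring
  -- pointwise bound
  have hpt : ∀ x ∈ Set.Ioc a b, (g x - c) ^ 2 ≤ L^2/(4*c₀) * (k:ℝ)^(-2*β) := by
    intro x hx
    have hxI : x ∈ Set.Icc (0:ℝ) 1 := hsub hx
    have hfx : c₀ ≤ f₀ x := hlb x hxI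
    have hfb : c₀ ≤ f₀ b := hlb b htI
    have hgx : Real.sqrt c₀ ≤ g x := Real.sqrt_le_sqrt hfx
    have hgb : Real.sqrt c₀ ≤ c := Real.sqrt_le_sqrt hfb
    have hsc : (0:ℝ) < Real.sqrt c₀ := Real.sqrt_pos.mpr hc₀
    have hgc0 : (0:ℝ) < g x + c := by linarith
    have hmul : (g x - c) * (g x + c) = f₀ x - f₀ b := by
      have h1 : g x ^ 2 = f₀ x := Real.sq_sqrt (le_trans hc₀.le hfx)
      have h2 : c ^ 2 = f₀ b := Real.sq_sqrt (le_trans hc₀.le hfb)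
      nlinarith [h1, h2]
    have hH : |f₀ x - f₀ b| ≤ L * |x - b| ^ β := hHolder x hxI b htI
    have hxb : |x - b| ≤ 1/k := by
      rw [abs_sub_comm, abs_of_nonneg (by linarith [hx.2] : (0:ℝ) ≤ b - x)]
      have := hx.1
      linarith [hba]
    have hrp : |x - b| ^ β ≤ (1/(k:ℝ)) ^ β :=
      Real.rpow_le_rpow (abs_nonneg _) hxb hβ0.le
    have hrp2 : ((1/(k:ℝ)) ^ β) ^ 2 = (k:ℝ) ^ (-2*β) := by
      rw [one_div, ← Real.rpow_neg_one (k:ℝ),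
        ← Real.rpow_natCast (((k:ℝ) ^ (-1:ℝ)) ^ β) 2,
        ← Real.rpow_mul hk0.le, ← Real.rpow_mul hk0.le]
      congr 1
      push_cast
      ring
    -- |g x - c| ≤ L |x-b|^β / (2 √c₀)
    have key : (g x - c)^2 * (g x + c)^2 ≤ (L * (1/(k:ℝ))^β)^2 := by
      have h1 : (g x - c)^2 * (g x + c)^2 = (f₀ x - f₀ b)^2 := by
        rw [← mul_pow, hmul]
      rw [h1]
      have h2 : |f₀ x - f₀ b| ≤ L * (1/(k:ℝ))^β :=
        hH.trans (mul_le_mul_of_nonneg_left hrp hL.le)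
      calc (f₀ x - f₀ b)^2 = |f₀ x - f₀ b|^2 := (sq_abs _).symm
      _ ≤ (L * (1/(k:ℝ))^β)^2 := pow_le_pow_left₀ (abs_nonneg _) h2 2
    have h4c : 4 * c₀ ≤ (g x + c)^2 := by nlinarith [Real.sq_sqrt hc₀.le]
    have hnum : (g x - c)^2 * (4 * c₀) ≤ (L * (1/(k:ℝ))^β)^2 :=
      le_trans (mul_le_mul_of_nonneg_left h4c (sq_nonneg (g x - c))) key
    have : (g x - c)^2 ≤ (L * (1/(k:ℝ))^β)^2 / (4 * c₀) :=
      (le_div_iff₀ (by positivity)).mpr hnum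
    calc (g x - c)^2 ≤ (L * (1/(k:ℝ))^β)^2 / (4 * c₀) := this
    _ = L^2/(4*c₀) * ((1/(k:ℝ))^β)^2 := by ring
    _ = L^2/(4*c₀) * (k:ℝ)^(-2*β) := by rw [hrp2]
  -- integral bound
  have hIb : ∫ x in Set.Ioc a b, (g x - c)^2 ≤ (L^2/(4*c₀) * (k:ℝ)^(-2*β)) * (1/k) := by
    calc ∫ x in Set.Ioc a b, (g x - c)^2
        ≤ ∫ _x in Set.Ioc a b, L^2/(4*c₀) * (k:ℝ)^(-2*β) := by
          apply setIntegral_mono_on hgc2_int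
            ((integrableOn_const_iff).mpr (Or.inr (by rw [Real.volume_Ioc]; exact ENNReal.ofReal_lt_top)))
            measurableSet_Ioc hpt
    _ = (L^2/(4*c₀) * (k:ℝ)^(-2*β)) * (1/k) := by
          rw [setIntegral_const, smul_eq_mul, measureReal_def, hvol]; ring
  -- AM-GM step
  set S : ℝ := ∫ x in Set.Ioc a b, g x with hS
  have hAM : (∫ x in Set.Ioc a b, f₀ x) - (k:ℝ) * S^2
      ≤ ∫ x in Set.Ioc a b, (g x - c)^2 := by
    rw [hexp]
    have hkne : (k:ℝ) ≠ 0 := hk0.ne'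
    have h2 : 0 ≤ ((k:ℝ)*S - c)^2 / (k:ℝ) := by positivity
    have h4 : ((k:ℝ)*S - c)^2 / (k:ℝ) = (k:ℝ)*S^2 - 2*c*S + c^2*(1/k) := by
      field_simp; ring
    rw [h4] at h2
    linarith
  calc (∫ y in cell k j, f₀ y) - (k:ℝ) * (∫ y in cell k j, g y) ^ 2
      ≤ ∫ x in Set.Ioc a b, (g x - c)^2 := hAM
  _ ≤ (L^2/(4*c₀)) * (k:ℝ)^(-2*β) * (1/k) := hIb

/-- For a continuous density `f₀` on `[0,1]` which is `β`-Hölder with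
constant `L` (`β ∈ (0,1]`) and bounded below by `c₀ > 0`, the squared Hellinger histogram
approximation error satisfies `b(k)² = 1 − k ∑_j (∫_{I_j} √f₀)² ≤ C k^{−2β}` for a constant
`C` depending only on `L, β, c₀`. -/
theorem stmt_12 (β L c₀ : ℝ) (hβ0 : 0 < β) (hβ1 : β ≤ 1) (hL : 0 < L) (hc₀ : 0 < c₀) :
    ∃ C : ℝ, 0 < C ∧
      ∀ (f₀ : ℝ → ℝ), ContinuousOn f₀ (Set.Icc (0 : ℝ) 1) →
        (∀ x ∈ Set.Icc (0 : ℝ) 1, ∀ y ∈ Set.Icc (0 : ℝ) 1,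
          |f₀ x - f₀ y| ≤ L * |x - y| ^ β) →
        (∀ x ∈ Set.Icc (0 : ℝ) 1, c₀ ≤ f₀ x) →
        (∫ x in Set.Ioc (0 : ℝ) 1, f₀ x) = 1 →
      ∀ k : ℕ, 0 < k →
        1 - (k : ℝ) * ∑ j : Fin k, (∫ y in cell k j, Real.sqrt (f₀ y)) ^ 2
          ≤ C * (k : ℝ) ^ (-2 * β) := by
  refine ⟨L^2/(4*c₀), by positivity, ?_⟩
  intro f₀ hcont hHolder hlb hint k hk
  have hk0 : (0:ℝ) < k := Nat.cast_pos.mpr hk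
  -- sum of integrals of f₀ over cells equals 1
  have hsumf : ∑ j : Fin k, (∫ y in cell k j, f₀ y) = 1 := by
    have hInt : ∀ i, i < k → IntervalIntegrable f₀ volume ((i:ℝ)/k) (((i:ℝ)+1)/k) := by
      intro i hi
      apply ContinuousOn.intervalIntegrable
      apply hcont.mono
      rw [Set.uIcc_of_le (by gcongr <;> linarith)]
      apply Set.Icc_subset_Icc
      · positivity
      · rw [div_le_one hk0]; exact_mod_cast hi
    have hadj : ∑ i ∈ Finset.range k, ∫ x in ((i:ℝ)/k)..(((i:ℝ)+1)/k), f₀ x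
        = ∫ x in ((0:ℕ):ℝ)/k..((k:ℕ):ℝ)/k, f₀ x := by
      have := intervalIntegral.sum_integral_adjacent_intervals
        (f := f₀) (μ := volume) (a := fun i : ℕ => (i:ℝ)/k) (n := k) ?_
      · convert this using 2 with i
        push_cast; ring_nf
      · intro i hi
        have := hInt i hi
        convert this using 2
        push_cast; ring
    simp only [cell]
    rw [Fin.sum_univ_eq_sum_range (fun i => ∫ y in Set.Ioc ((i:ℝ)/k) (((i:ℝ)+1)/k), f₀ y)]
    have : ∀ i ∈ Finset.range k, (∫ y in Set.Ioc ((i:ℝ)/k) (((i:ℝ)+1)/k), f₀ y)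
        = ∫ x in ((i:ℝ)/k)..(((i:ℝ)+1)/k), f₀ x := by
      intro i hi
      rw [intervalIntegral.integral_of_le (by gcongr <;> linarith)]
    rw [Finset.sum_congr rfl this, hadj]
    simp only [Nat.cast_zero, zero_div, div_self (ne_of_gt hk0)]
    rw [intervalIntegral.integral_of_le (by norm_num : (0:ℝ) ≤ 1)]
    exact hint
  have hcellkey := fun j => cell_key β L c₀ hβ0 hL hc₀ f₀ hcont hHolder hlb k hk j
  have hsum : ∑ j : Fin k, ((∫ y in cell k j, f₀ y)
        - (k:ℝ) * (∫ y in cell k j, Real.sqrt (f₀ y)) ^ 2)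
      ≤ ∑ _j : Fin k, (L^2/(4*c₀)) * (k:ℝ)^(-2*β) * (1/k) :=
    Finset.sum_le_sum (fun j _ => hcellkey j)
  rw [Finset.sum_sub_distrib, hsumf, ← Finset.mul_sum, Finset.sum_const,
    Finset.card_univ, Fintype.card_fin, nsmul_eq_mul] at hsum
  calc 1 - (k : ℝ) * ∑ j : Fin k, (∫ y in cell k j, Real.sqrt (f₀ y)) ^ 2
      ≤ (k:ℝ) * ((L^2/(4*c₀)) * (k:ℝ)^(-2*β) * (1/k)) := hsum
  _ = L^2/(4*c₀) * (k:ℝ)^(-2*β) := by field_simp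

end
end

section
/- In the fixed-design Gaussian regression model with noise variance σ², for each θ ∈ ℝ^n the likelihood-ratio test φ_n(θ) = 1{‖x − F θ‖² ≤ ‖x − F θ₀‖²} (F the design matrix with orthonormal columns in the empirical norm) satisfies E_{θ₀}[φ_n(θ)] ≤ exp(−n‖θ−θ₀‖₂²/(8σ²)) and sup over θ' with ‖θ'−θ‖₂ ≤ ‖θ−θ₀‖₂/18 of E_{θ'}[1−φ_n(θ)] ≤ exp(−c n‖θ−θ₀‖₂²) for an absolute constant c > 0 (depending on σ). -/
open MeasureTheory ProbabilityTheory Real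
open scoped NNReal ENNReal

lemma pdf_shift {m : ℝ} {v : ℝ≥0} (hv : v ≠ 0) (s x : ℝ) :
    Real.exp (s * x) * gaussianPDFReal m v x
      = Real.exp (s * m + s ^ 2 * v / 2) * gaussianPDFReal (m + s * v) v x := by
  have hv0 : (0:ℝ) < v := by positivity
  rw [gaussianPDFReal, gaussianPDFReal]
  rw [mul_left_comm, mul_left_comm (Real.exp _), ← Real.exp_add, ← Real.exp_add]
  congr 2
  field_simp
  ring

lemma integrable_exp_gauss (m : ℝ) {v : ℝ≥0} (hv : v ≠ 0) (s : ℝ) :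
    Integrable (fun x => Real.exp (s * x)) (gaussianReal m v) := by
  rw [gaussianReal_of_var_ne_zero _ hv, gaussianPDF_def]
  have hmeas : Measurable fun x => (gaussianPDFReal m v x).toNNReal :=
    (measurable_gaussianPDFReal m v).real_toNNReal
  rw [show (fun x => ENNReal.ofReal (gaussianPDFReal m v x))
      = (fun x => ((fun y => (gaussianPDFReal m v y).toNNReal) x : ℝ≥0∞)) from rfl,
    integrable_withDensity_iff_integrable_smul hmeas]
  have : (fun x => ((gaussianPDFReal m v x).toNNReal : ℝ) • Real.exp (s * x))
      = fun x => Real.exp (s * m + s ^ 2 * v / 2) * gaussianPDFReal (m + s * v) v x := by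
    funext x
    rw [smul_eq_mul, Real.coe_toNNReal _ (gaussianPDFReal_nonneg m v x), mul_comm,
      pdf_shift hv]
  rw [show (fun x => ((gaussianPDFReal m v x).toNNReal) • Real.exp (s * x)) =
      fun x => ((gaussianPDFReal m v x).toNNReal : ℝ) • Real.exp (s * x) from rfl, this]
  exact (integrable_gaussianPDFReal _ _).const_mul _

lemma integral_exp_gauss (m : ℝ) {v : ℝ≥0} (hv : v ≠ 0) (s : ℝ) :
    ∫ x, Real.exp (s * x) ∂(gaussianReal m v) = Real.exp (s * m + s ^ 2 * v / 2) := by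
  rw [gaussianReal_of_var_ne_zero _ hv, gaussianPDF_def]
  have hmeas : Measurable fun x => (gaussianPDFReal m v x).toNNReal :=
    (measurable_gaussianPDFReal m v).real_toNNReal
  rw [show (fun x => ENNReal.ofReal (gaussianPDFReal m v x))
      = (fun x => ((fun y => (gaussianPDFReal m v y).toNNReal) x : ℝ≥0∞)) from rfl,
    integral_withDensity_eq_integral_smul hmeas]
  have : (fun x => ((gaussianPDFReal m v x).toNNReal) • Real.exp (s * x))
      = fun x => Real.exp (s * m + s ^ 2 * v / 2) * gaussianPDFReal (m + s * v) v x := by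
    funext x
    rw [NNReal.smul_def, smul_eq_mul, Real.coe_toNNReal _ (gaussianPDFReal_nonneg m v x),
      mul_comm, pdf_shift hv]
  rw [this, integral_const_mul, integral_gaussianPDFReal_eq_one _ hv, mul_one]

lemma pi_prod_integral {n : ℕ} (μ : Fin n → Measure ℝ) (h : ∀ i, SigmaFinite (μ i))
    (f : Fin n → ℝ → ℝ) :
    ∫ x : Fin n → ℝ, ∏ i, f i (x i) ∂(Measure.pi μ) = ∏ i, ∫ y, f i y ∂(μ i) := by
  induction n with
  | zero => simp [Measure.pi_of_empty, Measure.real]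
  | succ m ih =>
    haveI := h
    have hmp := (measurePreserving_piFinSuccAbove μ 0).symm
    rw [← hmp.integral_comp']
    simp_rw [MeasurableEquiv.piFinSuccAbove_symm_apply, Fin.insertNthEquiv,
      Fin.prod_univ_succ, Fin.insertNth_zero, Equiv.coe_fn_mk, Fin.cons_succ,
      Fin.zero_succAbove, Fin.cons_zero, cast_eq]
    rw [integral_prod_mul (μ := μ 0) (ν := Measure.pi fun i => μ i.succ)
      (f := f 0) (g := fun y => ∏ i : Fin m, f i.succ (y i)),
      ih (fun i => μ i.succ) (fun i => h _) (fun i => f i.succ)]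

lemma pi_prod_integrable {n : ℕ} (μ : Fin n → Measure ℝ) (h : ∀ i, SigmaFinite (μ i))
    (f : Fin n → ℝ → ℝ) (hf : ∀ i, Integrable (f i) (μ i)) :
    Integrable (fun x : Fin n → ℝ => ∏ i, f i (x i)) (Measure.pi μ) := by
  induction n with
  | zero =>
    simp only [Finset.univ_eq_empty, Finset.prod_empty]
    rw [Measure.pi_of_empty]
    exact integrable_const _
  | succ m ih =>
    haveI := h
    have hmp := (measurePreserving_piFinSuccAbove μ 0).symm
    rw [← hmp.integrable_comp_emb (MeasurableEquiv.measurableEmbedding _)]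
    simp_rw [MeasurableEquiv.piFinSuccAbove_symm_apply, Fin.insertNthEquiv,
      Fin.prod_univ_succ, Fin.insertNth_zero, Equiv.coe_fn_mk, Function.comp_def,
      Fin.cons_succ, Fin.zero_succAbove, Fin.cons_zero, cast_eq]
    exact Integrable.mul_prod (hf 0) (ih (fun i => μ i.succ) (fun i => h _)
      (fun i => f i.succ) (fun i => hf _))

/-- mgf of a linear functional under a product of Gaussians. -/
lemma pi_gauss_exp_int {n : ℕ} (u m : Fin n → ℝ) {v : ℝ≥0} (hv : v ≠ 0) (t : ℝ) :
    Integrable (fun x : Fin n → ℝ => Real.exp (t * ∑ i, u i * x i))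
      (Measure.pi fun i => gaussianReal (m i) v) := by
  have : (fun x : Fin n → ℝ => Real.exp (t * ∑ i, u i * x i))
      = fun x => ∏ i, Real.exp ((t * u i) * x i) := by
    funext x
    rw [← Real.exp_sum, Finset.mul_sum]
    congr 1
    exact Finset.sum_congr rfl fun i _ => by ring
  rw [this]
  exact pi_prod_integrable _ (fun i => inferInstance) _
    (fun i => integrable_exp_gauss _ hv _)

lemma pi_gauss_mgf {n : ℕ} (u m : Fin n → ℝ) {v : ℝ≥0} (hv : v ≠ 0) (t : ℝ) :
    mgf (fun x : Fin n → ℝ => ∑ i, u i * x i) (Measure.pi fun i => gaussianReal (m i) v) t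
      = Real.exp (t * (∑ i, u i * m i) + t ^ 2 * v * (∑ i, u i ^ 2) / 2) := by
  rw [mgf]
  have h1 : (fun x : Fin n → ℝ => Real.exp (t * ∑ i, u i * x i))
      = fun x => ∏ i, Real.exp ((t * u i) * x i) := by
    funext x
    rw [← Real.exp_sum, Finset.mul_sum]
    congr 1
    exact Finset.sum_congr rfl fun i _ => by ring
  calc ∫ x : Fin n → ℝ, Real.exp (t * ∑ i, u i * x i)
        ∂(Measure.pi fun i => gaussianReal (m i) v)
      = ∫ x : Fin n → ℝ, ∏ i, Real.exp ((t * u i) * x i)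
        ∂(Measure.pi fun i => gaussianReal (m i) v) := by rw [h1]
    _ = ∏ i, ∫ y, Real.exp ((t * u i) * y) ∂(gaussianReal (m i) v) :=
        pi_prod_integral (fun i => gaussianReal (m i) v) (fun i => inferInstance)
          (fun i y => Real.exp ((t * u i) * y))
    _ = ∏ i, Real.exp ((t * u i) * m i + (t * u i) ^ 2 * v / 2) := by
        exact Finset.prod_congr rfl fun i _ => integral_exp_gauss _ hv _
    _ = Real.exp (∑ i, ((t * u i) * m i + (t * u i) ^ 2 * v / 2)) := (Real.exp_sum _ _).symm
    _ = Real.exp (t * (∑ i, u i * m i) + t ^ 2 * v * (∑ i, u i ^ 2) / 2) := by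
        congr 1
        rw [Finset.sum_add_distrib, Finset.mul_sum, Finset.mul_sum, Finset.sum_div]
        congr 1
        · exact Finset.sum_congr rfl fun i _ => by ring
        · exact Finset.sum_congr rfl fun i _ => by ring


noncomputable section

def regLaw (n : ℕ) (σ : ℝ) (F : (Fin n → ℝ) →ₗ[ℝ] (Fin n → ℝ))
    (θ : Fin n → ℝ) : Measure (Fin n → ℝ) :=
  Measure.pi fun i => gaussianReal (F θ i) (Real.toNNReal (σ ^ 2))

/-- acceptance region of the likelihood-ratio test `φ_n(θ) = 1{‖x−Fθ‖² ≤ ‖x−Fθ₀‖²}`. -/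
def testSet (n : ℕ) (F : (Fin n → ℝ) →ₗ[ℝ] (Fin n → ℝ))
    (θ₀ θ : Fin n → ℝ) : Set (Fin n → ℝ) :=
  {x | ∑ i, (x i - F θ i) ^ 2 ≤ ∑ i, (x i - F θ₀ i) ^ 2}

/-- In the fixed-design Gaussian regression model with orthonormal design,
the likelihood-ratio test has type I error `≤ exp(−n‖θ−θ₀‖₂²/(8σ²))` and, for some
constant `c > 0` depending only on `σ`, type II error `≤ exp(−c n‖θ−θ₀‖₂²)` uniformly over
`‖θ'−θ‖₂ ≤ ‖θ−θ₀‖₂/18`. -/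
theorem stmt_15 (σ : ℝ) (hσ : 0 < σ) :
    ∃ c : ℝ, 0 < c ∧
      ∀ (n : ℕ), 0 < n →
      ∀ (F : (Fin n → ℝ) →ₗ[ℝ] (Fin n → ℝ)),
        (∀ v : Fin n → ℝ, ∑ i, (F v i) ^ 2 = (n : ℝ) * ∑ j, v j ^ 2) →
      ∀ θ₀ θ : Fin n → ℝ,
        ((regLaw n σ F θ₀) (testSet n F θ₀ θ)).toReal
            ≤ Real.exp (-(n : ℝ) * (∑ j, (θ j - θ₀ j) ^ 2) / (8 * σ ^ 2)) ∧
          ∀ θ' : Fin n → ℝ,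
            Real.sqrt (∑ j, (θ' j - θ j) ^ 2) ≤
                Real.sqrt (∑ j, (θ j - θ₀ j) ^ 2) / 18 →
            ((regLaw n σ F θ') (testSet n F θ₀ θ)ᶜ).toReal
              ≤ Real.exp (-c * n * ∑ j, (θ j - θ₀ j) ^ 2) := by
  have hσ2 : (0:ℝ) < σ ^ 2 := by positivity
  refine ⟨8 / (81 * σ ^ 2), by positivity, ?_⟩
  intro n hn F hF θ₀ θ
  set v : ℝ≥0 := Real.toNNReal (σ ^ 2) with hvdef
  have hvr : (v : ℝ) = σ ^ 2 := Real.coe_toNNReal _ hσ2.le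
  have hv : v ≠ 0 := by
    intro h0
    rw [h0] at hvr
    simp at hvr
    exact absurd hvr.symm hσ2.ne'
  -- polarization identity
  have hpol : ∀ a b : Fin n → ℝ, ∑ i, F a i * F b i = (n:ℝ) * ∑ j, a j * b j := by
    intro a b
    have h1 := hF a
    have h2 := hF b
    have h3 := hF (a + b)
    simp only [map_add, Pi.add_apply] at h3
    have e1 : ∑ i, (F a i + F b i) ^ 2
        = ∑ i, (F a i) ^ 2 + 2 * ∑ i, F a i * F b i + ∑ i, (F b i) ^ 2 := by
      rw [Finset.mul_sum, ← Finset.sum_add_distrib, ← Finset.sum_add_distrib]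
      exact Finset.sum_congr rfl fun i _ => by ring
    have e2 : ∑ j, (a j + b j) ^ 2
        = ∑ j, a j ^ 2 + 2 * ∑ j, a j * b j + ∑ j, b j ^ 2 := by
      rw [Finset.mul_sum, ← Finset.sum_add_distrib, ← Finset.sum_add_distrib]
      exact Finset.sum_congr rfl fun j _ => by ring
    rw [e1, e2, h1, h2] at h3
    linear_combination h3 / 2
  set u : Fin n → ℝ := fun i => F θ i - F θ₀ i with hu
  set d2 := ∑ j, (θ j - θ₀ j) ^ 2 with hd2def
  have hd2 : 0 ≤ d2 := Finset.sum_nonneg fun _ _ => sq_nonneg _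
  set D := (n:ℝ) * d2 with hDdef
  have hDnn : 0 ≤ D := mul_nonneg (Nat.cast_nonneg n) hd2
  have hD : ∑ i, u i ^ 2 = D := by
    have h := hF (θ - θ₀)
    simp only [map_sub, Pi.sub_apply] at h
    exact h
  haveI hprob : ∀ η : Fin n → ℝ, IsProbabilityMeasure (regLaw n σ F η) := by
    intro η
    unfold regLaw
    infer_instance
  set X : (Fin n → ℝ) → ℝ := fun x => ∑ i, u i * x i with hX
  set t₀ : ℝ := ((∑ i, (F θ i) ^ 2) - ∑ i, (F θ₀ i) ^ 2) / 2 with ht₀def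
  -- the test set as a one-dimensional event
  have hset : testSet n F θ₀ θ = {x | t₀ ≤ X x} := by
    ext x
    simp only [testSet, Set.mem_setOf_eq]
    have e : ∀ a : Fin n → ℝ, ∑ i, (x i - a i) ^ 2
        = ∑ i, (x i) ^ 2 - 2 * ∑ i, a i * x i + ∑ i, a i ^ 2 := by
      intro a
      rw [Finset.mul_sum, ← Finset.sum_sub_distrib, ← Finset.sum_add_distrib]
      exact Finset.sum_congr rfl fun i _ => by ring
    have hXeq : X x = ∑ i, F θ i * x i - ∑ i, F θ₀ i * x i := by
      rw [hX, ← Finset.sum_sub_distrib]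
      exact Finset.sum_congr rfl fun i _ => by rw [hu]; ring
    rw [e (fun i => F θ i), e (fun i => F θ₀ i), ht₀def]
    constructor <;> intro h <;> [linarith [hXeq]; linarith [hXeq]]
  -- moment generating function
  have hmgf : ∀ (η : Fin n → ℝ) (t : ℝ),
      mgf X (regLaw n σ F η) t
        = Real.exp (t * (∑ i, u i * F η i) + t ^ 2 * σ ^ 2 * D / 2) := by
    intro η t
    have h := pi_gauss_mgf u (fun i => F η i) hv t
    rw [hvr, hD] at h
    exact h
  have hint : ∀ (η : Fin n → ℝ) (t : ℝ),
      Integrable (fun x => Real.exp (t * X x)) (regLaw n σ F η) :=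
    fun η t => pi_gauss_exp_int u (fun i => F η i) hv t
  -- relation between t₀ and the mean under θ₀
  have hM0 : t₀ - (∑ i, u i * F θ₀ i) = D / 2 := by
    have e3 : ∑ i, u i ^ 2
        = ∑ i, (F θ i) ^ 2 - 2 * ∑ i, F θ i * F θ₀ i + ∑ i, (F θ₀ i) ^ 2 := by
      rw [Finset.mul_sum, ← Finset.sum_sub_distrib, ← Finset.sum_add_distrib]
      exact Finset.sum_congr rfl fun i _ => by rw [hu]; ring
    have e4 : ∑ i, u i * F θ₀ i
        = ∑ i, F θ i * F θ₀ i - ∑ i, (F θ₀ i) ^ 2 := by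
      rw [← Finset.sum_sub_distrib]
      exact Finset.sum_congr rfl fun i _ => by rw [hu]; ring
    rw [ht₀def, e4, ← hD, e3]
    ring
  constructor
  · -- Type I error
    haveI := hprob θ₀
    have h1 := measure_ge_le_exp_mul_mgf (X := X) (μ := regLaw n σ F θ₀)
      t₀ (t := 1 / (2 * σ ^ 2)) (by positivity) (hint θ₀ _)
    rw [hset]
    refine h1.trans ?_
    rw [hmgf θ₀, ← Real.exp_add]
    apply le_of_eq
    congr 1
    have ht : t₀ = (∑ i, u i * F θ₀ i) + D / 2 := by linarith
    rw [ht, hDdef]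
    field_simp
    ring
  · -- Type II error
    intro θ' hθ'
    haveI := hprob θ'
    set e2 := ∑ j, (θ' j - θ j) ^ 2 with he2def
    have he2nn : 0 ≤ e2 := Finset.sum_nonneg fun _ _ => sq_nonneg _
    -- Cauchy-Schwarz
    have hCS : (∑ j, (θ j - θ₀ j) * (θ' j - θ j)) ^ 2 ≤ d2 * e2 :=
      Finset.sum_mul_sq_le_sq_mul_sq Finset.univ _ _
    have hsq : (Real.sqrt d2 * Real.sqrt e2) ^ 2 = d2 * e2 := by
      rw [mul_pow, Real.sq_sqrt hd2, Real.sq_sqrt he2nn]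
    have habs : -(Real.sqrt d2 * Real.sqrt e2) ≤ ∑ j, (θ j - θ₀ j) * (θ' j - θ j) := by
      have h8 : |∑ j, (θ j - θ₀ j) * (θ' j - θ j)| ≤ Real.sqrt d2 * Real.sqrt e2 := by
        rw [← Real.sqrt_sq_eq_abs, ← Real.sqrt_mul hd2]
        exact Real.sqrt_le_sqrt hCS
      linarith [neg_abs_le (∑ j, (θ j - θ₀ j) * (θ' j - θ j)), h8]
    have hIP : -(d2 / 18) ≤ ∑ j, (θ j - θ₀ j) * (θ' j - θ j) := by
      have h3 : Real.sqrt d2 * Real.sqrt e2 ≤ Real.sqrt d2 * (Real.sqrt d2 / 18) :=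
        mul_le_mul_of_nonneg_left hθ' (Real.sqrt_nonneg _)
      have h4 : Real.sqrt d2 * Real.sqrt d2 = d2 := Real.mul_self_sqrt hd2
      have h5 : Real.sqrt d2 * (Real.sqrt d2 / 18) = d2 / 18 := by
        rw [← mul_div_assoc, h4]
      linarith
    -- the mean under θ'
    have hM' : (∑ i, u i * F θ' i) - (∑ i, u i * F θ₀ i)
        = (n:ℝ) * ∑ j, (θ j - θ₀ j) * (θ' j - θ₀ j) := by
      have hp := hpol (θ - θ₀) (θ' - θ₀)
      simp only [map_sub, Pi.sub_apply] at hp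
      calc (∑ i, u i * F θ' i) - (∑ i, u i * F θ₀ i)
          = ∑ i, (F θ i - F θ₀ i) * (F θ' i - F θ₀ i) := by
            rw [← Finset.sum_sub_distrib]
            exact Finset.sum_congr rfl fun i _ => by rw [hu]; ring
        _ = (n:ℝ) * ∑ j, (θ j - θ₀ j) * (θ' j - θ₀ j) := hp
    have hsplit : ∑ j, (θ j - θ₀ j) * (θ' j - θ₀ j)
        = d2 + ∑ j, (θ j - θ₀ j) * (θ' j - θ j) := by
      rw [hd2def, ← Finset.sum_add_distrib]
      exact Finset.sum_congr rfl fun j _ => by ring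
    have hnpos : (0:ℝ) ≤ (n:ℝ) := Nat.cast_nonneg n
    have hMt : (4/9) * D ≤ (∑ i, u i * F θ' i) - t₀ := by
      have h6 : (n:ℝ) * (-(d2/18)) ≤ (n:ℝ) * ∑ j, (θ j - θ₀ j) * (θ' j - θ j) :=
        mul_le_mul_of_nonneg_left hIP hnpos
      have h7 : (∑ i, u i * F θ' i) - t₀
          = (n:ℝ) * d2 + (n:ℝ) * (∑ j, (θ j - θ₀ j) * (θ' j - θ j)) - D / 2 := by
        have := hM'
        rw [hsplit] at this
        have hM0' := hM0
        rw [hDdef]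
        linarith [this]
      rw [h7, hDdef]
      linarith
    -- Chernoff lower bound
    set a : ℝ := 4 / (9 * σ ^ 2) with hadef
    have ha : 0 < a := by rw [hadef]; positivity
    have h2 := measure_le_le_exp_mul_mgf (X := X) (μ := regLaw n σ F θ')
      t₀ (t := -a) (by linarith) (hint θ' _)
    have hsub : (testSet n F θ₀ θ)ᶜ ⊆ {x | X x ≤ t₀} := by
      rw [hset]
      intro x hx
      simp only [Set.mem_compl_iff, Set.mem_setOf_eq, not_le] at hx ⊢
      exact hx.le
    have hmono : ((regLaw n σ F θ') (testSet n F θ₀ θ)ᶜ).toReal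
        ≤ ((regLaw n σ F θ') {x | X x ≤ t₀}).toReal :=
      ENNReal.toReal_mono (measure_ne_top _ _) (measure_mono hsub)
    refine hmono.trans (h2.trans ?_)
    rw [hmgf θ', ← Real.exp_add]
    apply Real.exp_le_exp.mpr
    set M' := ∑ i, u i * F θ' i with hM'def
    have key : -a * ((4/9) * D) + (-a) ^ 2 * σ ^ 2 * D / 2 = -(8 / (81 * σ ^ 2)) * D := by
      rw [hadef]
      field_simp
      ring
    have hprod : a * ((4/9) * D) ≤ a * (M' - t₀) := mul_le_mul_of_nonneg_left hMt ha.le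
    have hexp : - -a * t₀ + (-a * M' + (-a) ^ 2 * σ ^ 2 * D / 2)
        = -(a * (M' - t₀)) + (-a) ^ 2 * σ ^ 2 * D / 2 := by ring
    have hfin : -(8 / (81 * σ ^ 2)) * D = -(8 / (81 * σ ^ 2)) * (n:ℝ) * d2 := by
      rw [hDdef]; ring
    linarith [hexp, hprod, key, hfin]

end
end

section
/- Let the sieve prior (T1) put θ_j iid with density g (positive, continuous, with ∫e^{s₀|x|^{p*}}g(x)dx < ∞) for j ≤ k and θ_j = 0 for j > k, and let θ₀ ∈ ℓ². Then for 2 ≤ k ≤ εn/log n with ε small enough, the small-ball exponent ε_n(k) defined by Π(‖θ−θ₀‖₂ ≤ Kε_n(k) | k) = e^{−nε_n(k)²} satisfies ε_n(k)² ≍ ∑_{i>k} θ₀,i² + (k log n)/n, with constants depending on K, g, ‖θ₀‖. -/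
open MeasureTheory Real
open scoped ENNReal

set_option maxHeartbeats 1000000

noncomputable section

/-- the sieve prior (T1) at truncation level `k`: the first `k` coordinates are iid with
density `g`, the remaining ones are `0`. -/
def sievePrior (k : ℕ) (g : ℝ → ℝ) : Measure (Fin k → ℝ) :=
  Measure.pi fun _ : Fin k => volume.withDensity fun x => ENNReal.ofReal (g x)

/-- squared `ℓ²` tail `∑_{i > k} θ₀_i²` (coordinates of `θ₀` indexed from `0`). -/
def sqTail (k : ℕ) (θ₀ : ℕ → ℝ) : ℝ := ∑' j : ℕ, if k ≤ j then θ₀ j ^ 2 else 0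

lemma lintegral_pi_prod : ∀ (k : ℕ) (ν : Measure ℝ) [SigmaFinite ν] (f : Fin k → ℝ → ℝ≥0∞),
    (∀ i, Measurable (f i)) →
    ∫⁻ x : Fin k → ℝ, ∏ i, f i (x i) ∂Measure.pi (fun _ => ν) = ∏ i, ∫⁻ t, f i t ∂ν := by
  intro k
  induction k with
  | zero =>
    intro ν _ f _
    simp [lintegral_const, Measure.pi_univ]
  | succ n ih =>
    intro ν _ f hf
    rw [← ((measurePreserving_piFinSuccAbove (fun _ : Fin (n+1) => ν) 0).symm).lintegral_comp_emb
          (MeasurableEquiv.measurableEmbedding _)]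
    simp_rw [MeasurableEquiv.piFinSuccAbove_symm_apply, Fin.insertNthEquiv, Equiv.coe_fn_mk,
      Fin.insertNth_zero, Fin.prod_univ_succ, Fin.cons_zero, Fin.cons_succ, cast_eq]
    have hg : Measurable (fun b : Fin n → ℝ => ∏ x : Fin n, f x.succ (b x)) :=
      Finset.measurable_prod Finset.univ (fun j _ => (hf j.succ).comp (measurable_pi_apply j))
    have h := lintegral_prod_mul (μ := ν) (ν := Measure.pi fun _ : Fin n => ν) (f := f 0)
      (g := fun b : Fin n → ℝ => ∏ x : Fin n, f x.succ (b x)) (hf 0).aemeasurable hg.aemeasurable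
    rw [h, ih _ _ (fun j => hf j.succ)]

lemma nu_finite (g : ℝ → ℝ) (hg0 : ∀ x, 0 ≤ g x) (hg_int : Integrable g) :
    IsFiniteMeasure (volume.withDensity fun x => ENNReal.ofReal (g x)) := by
  constructor
  rw [withDensity_apply _ MeasurableSet.univ, setLIntegral_univ,
    ← ofReal_integral_eq_lintegral_ofReal hg_int (Filter.Eventually.of_forall hg0)]
  exact ENNReal.ofReal_lt_top

lemma measure_box_lower (g : ℝ → ℝ) (hg0 : ∀ x, 0 ≤ g x) (hgc : Continuous g)
    (hg_int : Integrable g)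
    (k : ℕ) (θ : Fin k → ℝ) (δ m' : ℝ) (hδ : 0 ≤ δ) (hm0 : 0 ≤ m')
    (hm : ∀ (i : Fin k) (t : ℝ), t ∈ Set.Icc (θ i - δ) (θ i + δ) → m' ≤ g t)
    (S : Set (Fin k → ℝ))
    (hsub : (Set.univ : Set (Fin k)).pi (fun i => Set.Icc (θ i - δ) (θ i + δ)) ⊆ S) :
    ENNReal.ofReal ((m' * (2*δ))^k) ≤ sievePrior k g S := by
  haveI := nu_finite g hg0 hg_int
  have h1 : ∀ i : Fin k, ENNReal.ofReal (m' * (2*δ))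
      ≤ (volume.withDensity fun x => ENNReal.ofReal (g x)) (Set.Icc (θ i - δ) (θ i + δ)) := by
    intro i
    rw [withDensity_apply _ measurableSet_Icc]
    calc ENNReal.ofReal (m' * (2*δ))
        = ENNReal.ofReal m' * volume (Set.Icc (θ i - δ) (θ i + δ)) := by
          rw [Real.volume_Icc, ← ENNReal.ofReal_mul hm0]
          congr 1
          ring
      _ = ∫⁻ _ in Set.Icc (θ i - δ) (θ i + δ), ENNReal.ofReal m' ∂volume :=
          (setLIntegral_const _ _).symm
      _ ≤ ∫⁻ t in Set.Icc (θ i - δ) (θ i + δ), ENNReal.ofReal (g t) ∂volume :=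
          setLIntegral_mono (ENNReal.measurable_ofReal.comp hgc.measurable)
            (fun t ht => ENNReal.ofReal_le_ofReal (hm i t ht))
  calc ENNReal.ofReal ((m' * (2*δ))^k)
      = ∏ _i : Fin k, ENNReal.ofReal (m' * (2*δ)) := by
        rw [Finset.prod_const, Finset.card_univ, Fintype.card_fin,
          ← ENNReal.ofReal_pow (by positivity)]
    _ ≤ ∏ i : Fin k, (volume.withDensity fun x => ENNReal.ofReal (g x))
          (Set.Icc (θ i - δ) (θ i + δ)) := Finset.prod_le_prod' (fun i _ => h1 i)
    _ = sievePrior k g ((Set.univ : Set (Fin k)).pi (fun i => Set.Icc (θ i - δ) (θ i + δ))) :=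
        (Measure.pi_pi _ _).symm
    _ ≤ sievePrior k g S := measure_mono hsub

lemma measure_ball_upper (g : ℝ → ℝ) (hg0 : ∀ x, 0 ≤ g x) (hgc : Continuous g)
    (k : ℕ) (hk : 0 < k) (θ : Fin k → ℝ) (ρsq M' : ℝ) (hρ : 0 < ρsq)
    (hM : ∀ (i : Fin k) (t : ℝ),
        t ∈ Set.Icc (θ i - Real.sqrt ρsq) (θ i + Real.sqrt ρsq) → g t ≤ M') :
    sievePrior k g {x : Fin k → ℝ | ∑ i, (x i - θ i)^2 ≤ ρsq}
      ≤ ENNReal.ofReal ((M' * Real.exp 2⁻¹ * Real.sqrt (π / ((k:ℝ)/(2*ρsq))))^k) := by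
  set ν := volume.withDensity fun x => ENNReal.ofReal (g x) with hν
  set lam := (k:ℝ)/(2*ρsq) with hlam
  have hk0 : (0:ℝ) < k := Nat.cast_pos.mpr hk
  have hlam_pos : 0 < lam := by positivity
  set ρ := Real.sqrt ρsq with hρdef
  have hρ0 : 0 ≤ ρ := Real.sqrt_nonneg _
  have hρsq' : ρ^2 = ρsq := Real.sq_sqrt hρ.le
  have hlamρ : lam * ρsq = (k:ℝ)/2 := by
    rw [hlam]; field_simp
  have hM0 : 0 ≤ M' := le_trans (hg0 (θ ⟨0, hk⟩))
    (hM ⟨0, hk⟩ (θ ⟨0, hk⟩) ⟨by linarith, by linarith⟩)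
  set c := M' * Real.exp 2⁻¹ * Real.sqrt (π / lam) with hc
  have hc0 : 0 ≤ c := by positivity
  set F : Fin k → ℝ → ℝ≥0∞ := fun i t =>
    (Set.Icc (θ i - ρ) (θ i + ρ)).indicator
      (fun t => ENNReal.ofReal (Real.exp (2⁻¹ - lam*(t - θ i)^2))) t with hF
  have hFmeas : ∀ i, Measurable (F i) := by
    intro i
    apply Measurable.indicator _ measurableSet_Icc
    exact ENNReal.measurable_ofReal.comp
      (Real.continuous_exp.comp (by fun_prop)).measurable
  have hAmeas : MeasurableSet {x : Fin k → ℝ | ∑ i, (x i - θ i)^2 ≤ ρsq} := by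
    have hcont : Continuous fun x : Fin k → ℝ => ∑ i, (x i - θ i)^2 :=
      continuous_finset_sum _ fun i _ => ((continuous_apply i).sub continuous_const).pow 2
    exact measurableSet_le hcont.measurable measurable_const
  have h2 : ∀ x : Fin k → ℝ,
      ({x : Fin k → ℝ | ∑ i, (x i - θ i)^2 ≤ ρsq}).indicator (fun _ => (1:ℝ≥0∞)) x
        ≤ ∏ i, F i (x i) := by
    intro x
    by_cases hx : x ∈ {x : Fin k → ℝ | ∑ i, (x i - θ i)^2 ≤ ρsq}
    · rw [Set.indicator_of_mem hx]
      have hxs : ∑ i, (x i - θ i)^2 ≤ ρsq := hx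
      have hxi : ∀ i : Fin k, x i ∈ Set.Icc (θ i - ρ) (θ i + ρ) := by
        intro i
        have h1 : (x i - θ i)^2 ≤ ρsq :=
          le_trans (Finset.single_le_sum (f := fun j : Fin k => (x j - θ j)^2)
            (fun j _ => sq_nonneg _) (Finset.mem_univ i)) hxs
        have : |x i - θ i| ≤ ρ := by
          rw [← Real.sqrt_sq_eq_abs]; exact Real.sqrt_le_sqrt h1
        rcases abs_le.mp this with ⟨ha, hb⟩
        exact ⟨by linarith, by linarith⟩
      have heq : ∏ i, F i (x i)
          = ENNReal.ofReal (∏ i, Real.exp (2⁻¹ - lam*(x i - θ i)^2)) := by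
        rw [ENNReal.ofReal_prod_of_nonneg (fun i _ => (Real.exp_pos _).le)]
        exact Finset.prod_congr rfl (fun i _ => by rw [hF]; simp [Set.indicator_of_mem (hxi i)])
      rw [heq, ← Real.exp_sum]
      have hS : 0 ≤ ∑ i : Fin k, (2⁻¹ - lam*(x i - θ i)^2) := by
        rw [Finset.sum_sub_distrib, Finset.sum_const, Finset.card_univ, Fintype.card_fin,
          ← Finset.mul_sum]
        have : lam * ∑ i, (x i - θ i)^2 ≤ lam * ρsq :=
          mul_le_mul_of_nonneg_left hxs hlam_pos.le
        rw [hlamρ] at this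
        simp only [nsmul_eq_mul]
        linarith
      calc (1:ℝ≥0∞) = ENNReal.ofReal (Real.exp 0) := by simp
        _ ≤ _ := ENNReal.ofReal_le_ofReal (Real.exp_le_exp.mpr hS)
    · rw [Set.indicator_of_notMem hx]; exact zero_le
  have hcoord : ∀ i : Fin k, ∫⁻ t, F i t ∂ν ≤ ENNReal.ofReal c := by
    intro i
    rw [hν, lintegral_withDensity_eq_lintegral_mul _
      hgc.measurable.ennreal_ofReal (hFmeas i)]
    have hInt : Integrable (fun t => (M' * Real.exp 2⁻¹) * Real.exp (-lam*(t - θ i)^2)) :=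
      (((integrable_exp_neg_mul_sq hlam_pos).comp_sub_right (θ i))).const_mul _
    have hpt : ∀ t, ((fun t => ENNReal.ofReal (g t)) * F i) t
        ≤ ENNReal.ofReal ((M' * Real.exp 2⁻¹) * Real.exp (-lam*(t - θ i)^2)) := by
      intro t
      by_cases ht : t ∈ Set.Icc (θ i - ρ) (θ i + ρ)
      · simp only [hF, Pi.mul_apply, Set.indicator_of_mem ht]
        rw [← ENNReal.ofReal_mul (hg0 t)]
        apply ENNReal.ofReal_le_ofReal
        have hgt : g t ≤ M' := hM i t ht
        have hexp : Real.exp (2⁻¹ - lam*(t - θ i)^2)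
            = Real.exp 2⁻¹ * Real.exp (-lam*(t - θ i)^2) := by
          rw [← Real.exp_add]; ring_nf
        rw [hexp]
        have h1 : (0:ℝ) < Real.exp 2⁻¹ * Real.exp (-lam*(t - θ i)^2) := by positivity
        calc g t * (Real.exp 2⁻¹ * Real.exp (-lam*(t - θ i)^2))
            ≤ M' * (Real.exp 2⁻¹ * Real.exp (-lam*(t - θ i)^2)) :=
              mul_le_mul_of_nonneg_right hgt h1.le
          _ = (M' * Real.exp 2⁻¹) * Real.exp (-lam*(t - θ i)^2) := by ring
      · simp only [hF, Pi.mul_apply, Set.indicator_of_notMem ht, mul_zero]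
        exact zero_le
    calc ∫⁻ t, ((fun t => ENNReal.ofReal (g t)) * F i) t ∂volume
        ≤ ∫⁻ t, ENNReal.ofReal ((M' * Real.exp 2⁻¹) * Real.exp (-lam*(t - θ i)^2)) ∂volume :=
          lintegral_mono hpt
      _ = ENNReal.ofReal (∫ t, (M' * Real.exp 2⁻¹) * Real.exp (-lam*(t - θ i)^2) ∂volume) :=
          (ofReal_integral_eq_lintegral_ofReal hInt
            (Filter.Eventually.of_forall (fun t => by positivity))).symm
      _ = ENNReal.ofReal c := by
          rw [MeasureTheory.integral_const_mul]
          have hshift : ∫ t, Real.exp (-lam*(t - θ i)^2) ∂volume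
              = ∫ t, Real.exp (-lam*t^2) ∂volume :=
            integral_sub_right_eq_self (fun u => Real.exp (-lam*u^2)) (θ i)
          rw [hshift, integral_gaussian, hc]
  calc sievePrior k g {x : Fin k → ℝ | ∑ i, (x i - θ i)^2 ≤ ρsq}
      = ∫⁻ x, ({x : Fin k → ℝ | ∑ i, (x i - θ i)^2 ≤ ρsq}).indicator (fun _ => (1:ℝ≥0∞)) x
          ∂(sievePrior k g) := (lintegral_indicator_one hAmeas).symm
    _ ≤ ∫⁻ x, ∏ i, F i (x i) ∂(sievePrior k g) := lintegral_mono h2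
    _ = ∏ i, ∫⁻ t, F i t ∂ν := lintegral_pi_prod k ν F hFmeas
    _ ≤ ∏ _i : Fin k, ENNReal.ofReal c := Finset.prod_le_prod' (fun i _ => hcoord i)
    _ = ENNReal.ofReal (c^k) := by
        rw [Finset.prod_const, Finset.card_univ, Fintype.card_fin, ← ENNReal.ofReal_pow hc0]

/-- for the sieve prior with a positive continuous density `g` having an
exponential moment, and `θ₀ ∈ ℓ²`, the small-ball exponent `ε_n(k)` defined by
`Π(‖θ−θ₀‖₂ ≤ K ε_n(k) | k) = e^{−n ε_n(k)²}` satisfies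
`ε_n(k)² ≍ ∑_{i>k} θ₀_i² + k log n / n` for `2 ≤ k ≤ ε* n / log n`, `ε*` small enough. -/
theorem stmt_18 (g : ℝ → ℝ) (hg_pos : ∀ x, 0 < g x) (hg_cont : Continuous g)
    (hg_prob : ∫ x, g x = 1)
    (s₀ p : ℝ) (hs₀ : 0 < s₀) (hp : 1 ≤ p)
    (hmom : Integrable fun x => Real.exp (s₀ * |x| ^ p) * g x)
    (θ₀ : ℕ → ℝ) (hθ₀ : Summable fun i => θ₀ i ^ 2)
    (K : ℝ) (hK : 0 < K) :
    ∃ εstar cl cu : ℝ, ∃ N : ℕ, 0 < εstar ∧ 0 < cl ∧ 0 < cu ∧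
      ∀ n : ℕ, N ≤ n → ∀ k : ℕ, 2 ≤ k → (k : ℝ) ≤ εstar * n / Real.log n →
      ∀ εn : ℝ, 0 < εn →
        ((sievePrior k g)
            {x : Fin k → ℝ | (∑ i : Fin k, (x i - θ₀ i) ^ 2) + sqTail k θ₀
                ≤ K ^ 2 * εn ^ 2}).toReal
          = Real.exp (-(n : ℝ) * εn ^ 2) →
        cl * (sqTail k θ₀ + k * Real.log n / n) ≤ εn ^ 2 ∧
          εn ^ 2 ≤ cu * (sqTail k θ₀ + k * Real.log n / n) := by
  classical
  have hg0 : ∀ x, 0 ≤ g x := fun x => (hg_pos x).le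
  have hg_int : Integrable g := by
    by_contra h
    rw [integral_undef h] at hg_prob
    norm_num at hg_prob
  haveI hfinν := nu_finite g hg0 hg_int
  have hν_univ : (volume.withDensity fun x => ENNReal.ofReal (g x)) Set.univ = 1 := by
    rw [withDensity_apply _ MeasurableSet.univ, setLIntegral_univ,
      ← ofReal_integral_eq_lintegral_ofReal hg_int (Filter.Eventually.of_forall hg0), hg_prob,
      ENNReal.ofReal_one]
  have hprob : ∀ k : ℕ, sievePrior k g Set.univ = 1 := by
    intro k
    rw [sievePrior, ← Set.pi_univ Set.univ, Measure.pi_pi]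
    simp [hν_univ]
  -- bound on the coordinates of θ₀
  set R := ∑' i, θ₀ i ^ 2 with hRdef
  have hR0 : 0 ≤ R := tsum_nonneg fun i => sq_nonneg _
  have hθb : ∀ j : ℕ, |θ₀ j| ≤ Real.sqrt R := by
    intro j
    rw [← Real.sqrt_sq_eq_abs]
    exact Real.sqrt_le_sqrt (Summable.le_tsum hθ₀ j fun i _ => sq_nonneg _)
  set B := Real.sqrt R + K + 1 with hBdef
  have hBK : -B ≤ B := by
    have := Real.sqrt_nonneg R
    rw [hBdef]; linarith
  obtain ⟨xM, hxMmem, hxMmax⟩ :=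
    isCompact_Icc.exists_isMaxOn (Set.nonempty_Icc.mpr hBK) hg_cont.continuousOn
  set M := max 1 (g xM) with hMdef
  have hM1 : (1:ℝ) ≤ M := le_max_left _ _
  have hMb : ∀ x ∈ Set.Icc (-B) B, g x ≤ M := fun x hx =>
    le_trans (hxMmax hx) (le_max_right _ _)
  obtain ⟨xm, hxmmem, hxmmin⟩ :=
    isCompact_Icc.exists_isMinOn (Set.nonempty_Icc.mpr hBK) hg_cont.continuousOn
  set m := g xm with hmdef
  have hm_pos : 0 < m := hg_pos xm
  have hmb : ∀ x ∈ Set.Icc (-B) B, m ≤ g x := fun x hx => hxmmin hx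
  set A0 := (64:ℝ) + 8*|Real.log (9*M)| + 2*|Real.log (2*m)| with hA0def
  have hA064 : (64:ℝ) ≤ A0 := by
    have := abs_nonneg (Real.log (9*M))
    have := abs_nonneg (Real.log (2*m))
    rw [hA0def]; linarith
  refine ⟨1, min (1/(2*K^2)) (1/32), 1 + 1/K^2, ⌈Real.exp A0⌉₊, one_pos,
    lt_min (by positivity) (by norm_num), by positivity, ?_⟩
  intro n hnN k hk2 hkcond εn hεn hEq
  set L := Real.log n with hLdef
  have hnA : Real.exp A0 ≤ (n:ℝ) := le_trans (Nat.le_ceil _) (Nat.cast_le.mpr hnN)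
  have hn_pos : (0:ℝ) < n := lt_of_lt_of_le (Real.exp_pos _) hnA
  have hLA : A0 ≤ L := by
    rw [hLdef, ← Real.log_exp A0]
    exact Real.log_le_log (Real.exp_pos _) hnA
  have hL64 : (64:ℝ) ≤ L := le_trans hA064 hLA
  have hL0 : (0:ℝ) < L := by linarith
  have hk0 : (0:ℝ) < k := by
    have : (2:ℝ) ≤ k := by exact_mod_cast hk2
    linarith
  have hkL : (k:ℝ)*L ≤ n := by
    rw [one_mul] at hkcond
    calc (k:ℝ)*L ≤ ((n:ℝ)/L)*L := mul_le_mul_of_nonneg_right hkcond hL0.le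
      _ = n := div_mul_cancel₀ _ (ne_of_gt hL0)
  set u := (k:ℝ) * L / (n:ℝ) with hudef
  have hu_pos : 0 < u := by positivity
  have hu1 : u ≤ 1 := by rw [hudef, div_le_one hn_pos]; exact hkL
  have hnu : (n:ℝ)*u = (k:ℝ)*L := by
    rw [hudef]; field_simp
  set T := sqTail k θ₀ with hTdef
  have hT0 : 0 ≤ T := by
    rw [hTdef, sqTail]
    exact tsum_nonneg fun j => by by_cases h : k ≤ j <;> simp [h] <;> positivity
  have hL_le_n : L ≤ n := by rw [hLdef]; exact Real.log_le_self hn_pos.le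
  set w := L / (n:ℝ) with hwdef
  have hw_pos : 0 < w := by positivity
  have hw1 : w ≤ 1 := by rw [hwdef, div_le_one hn_pos]; exact hL_le_n
  have hkwu : (k:ℝ)*w = u := by rw [hwdef, hudef]; ring
  set P := Real.exp (-(n:ℝ) * εn^2) with hPdef
  have hPpos : 0 < P := Real.exp_pos _
  haveI : IsFiniteMeasure (sievePrior k g) := ⟨by rw [hprob k]; exact ENNReal.one_lt_top⟩
  set Aset := {x : Fin k → ℝ | (∑ i : Fin k, (x i - θ₀ i)^2) + T ≤ K^2 * εn^2} with hAsetdef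
  have hμA : sievePrior k g Aset = ENNReal.ofReal P := by
    rw [← hEq, ENNReal.ofReal_toReal (measure_ne_top _ _)]
  have hlogP : Real.log P = -(n:ℝ)*εn^2 := Real.log_exp _
  -- T < K² εn²
  have hTK : T < K^2*εn^2 := by
    by_contra hTc
    push_neg at hTc
    have hsub : Aset ⊆ Set.pi Set.univ (fun i : Fin k => {θ₀ (i:ℕ)}) := by
      intro x hx
      have hx' : (∑ i : Fin k, (x i - θ₀ i)^2) + T ≤ K^2*εn^2 := hx
      have hsum0 : ∑ i : Fin k, (x i - θ₀ i)^2 ≤ 0 := by linarith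
      rw [Set.mem_univ_pi]
      intro i
      have hle : (x i - θ₀ (i:ℕ))^2 ≤ 0 :=
        le_trans (Finset.single_le_sum (f := fun j : Fin k => (x j - θ₀ j)^2)
          (fun j _ => sq_nonneg _) (Finset.mem_univ i)) hsum0
      have hz : (x i - θ₀ (i:ℕ))^2 = 0 := le_antisymm hle (sq_nonneg _)
      have := pow_eq_zero_iff (n := 2) (by norm_num) |>.mp hz
      simp [sub_eq_zero.mp this]
    have hz : sievePrior k g Aset = 0 := by
      apply le_antisymm _ zero_le
      refine le_trans (measure_mono hsub) ?_
      rw [sievePrior, Measure.pi_pi]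
      apply le_of_eq
      apply Finset.prod_eq_zero (Finset.mem_univ (⟨0, by omega⟩ : Fin k))
      rw [withDensity_apply _ (measurableSet_singleton _)]
      exact setLIntegral_measure_zero _ _ Real.volume_singleton
    rw [hz] at hμA
    have : P ≤ 0 := ENNReal.ofReal_eq_zero.mp hμA.symm
    linarith
  set ρsq := K^2*εn^2 - T with hρsqdef
  have hρsq_pos : 0 < ρsq := by rw [hρsqdef]; linarith
  -- log L ≤ L/4
  have hsqL : (8:ℝ) ≤ Real.sqrt L := by
    have h := Real.sqrt_le_sqrt hL64
    rwa [show (64:ℝ) = 8^2 by norm_num, Real.sqrt_sq (by norm_num : (0:ℝ) ≤ 8)] at h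
  have hlogL : Real.log L ≤ L/4 := by
    have h1 : Real.log L = 2*Real.log (Real.sqrt L) := by
      rw [Real.log_sqrt hL0.le]; ring
    have h2 : Real.log (Real.sqrt L) ≤ Real.sqrt L - 1 :=
      Real.log_le_sub_one_of_pos (by linarith)
    have h4 : Real.sqrt L * Real.sqrt L = L := Real.mul_self_sqrt hL0.le
    have e : 8*Real.sqrt L ≤ L := by
      calc 8*Real.sqrt L ≤ Real.sqrt L * Real.sqrt L :=
            mul_le_mul_of_nonneg_right hsqL (Real.sqrt_nonneg L)
        _ = L := h4
    linarith [h1, h2, e]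
  constructor
  · -- lower bound
    by_contra hcon
    push_neg at hcon
    set cl := min (1/(2*K^2)) (1/32) with hcldef
    have hcl1 : cl ≤ 1/(2*K^2) := min_le_left _ _
    have hcl2 : cl ≤ 1/32 := min_le_right _ _
    have hcl_pos : 0 < cl := lt_min (by positivity) (by norm_num)
    have hK2cl : K^2 * cl ≤ 1/2 := by
      calc K^2 * cl ≤ K^2 * (1/(2*K^2)) := mul_le_mul_of_nonneg_left hcl1 (by positivity)
        _ = 1/2 := by
            rw [mul_one_div]
            rw [div_eq_div_iff (by positivity) (by norm_num)]
            ring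
    have h1 : K^2*εn^2 < K^2*(cl*(T+u)) := mul_lt_mul_of_pos_left hcon (by positivity)
    have h3 : K^2*(cl*(T+u)) ≤ (1/2)*(T+u) := by
      have h2 : K^2*(cl*(T+u)) = (K^2*cl)*(T+u) := by ring
      rw [h2]
      exact mul_le_mul_of_nonneg_right hK2cl (by linarith)
    have hTu : T < u := by linarith
    have hεu : εn^2 < u/16 := by
      have h5 : cl*(T+u) ≤ (1/32)*(T+u) := mul_le_mul_of_nonneg_right hcl2 (by linarith)
      linarith
    have hρu : ρsq < u := by
      rw [hρsqdef]; linarith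
    have hρ1 : Real.sqrt ρsq ≤ 1 := Real.sqrt_le_one.mpr (by linarith)
    have hMint : ∀ (i : Fin k) (t : ℝ),
        t ∈ Set.Icc ((fun i : Fin k => θ₀ (i:ℕ)) i - Real.sqrt ρsq)
          ((fun i : Fin k => θ₀ (i:ℕ)) i + Real.sqrt ρsq) → g t ≤ M := by
      intro i t ht
      obtain ⟨ht1, ht2⟩ := ht
      apply hMb
      obtain ⟨hb1, hb2⟩ := abs_le.mp (hθb i)
      have hs0 : 0 ≤ Real.sqrt ρsq := Real.sqrt_nonneg _
      simp only at ht1 ht2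
      constructor
      · rw [hBdef]; linarith
      · rw [hBdef]; linarith
    have hAeq : Aset = {x : Fin k → ℝ | ∑ i, (x i - (fun i : Fin k => θ₀ (i:ℕ)) i)^2 ≤ ρsq} := by
      rw [hAsetdef]
      ext x
      simp only [Set.mem_setOf_eq, hρsqdef]
      constructor <;> intro h <;> linarith
    have hup := measure_ball_upper g hg0 hg_cont k (by omega) (fun i : Fin k => θ₀ (i:ℕ))
      ρsq M hρsq_pos hMint
    rw [← hAeq, hμA] at hup
    set c := M * Real.exp 2⁻¹ * Real.sqrt (π / ((k:ℝ)/(2*ρsq))) with hcdef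
    have hc0 : 0 ≤ c := by positivity
    have hPc : P ≤ c^k := (ENNReal.ofReal_le_ofReal_iff (by positivity)).mp hup
    have hπlam : π / ((k:ℝ)/(2*ρsq)) ≤ 9*w := by
      have heq : π / ((k:ℝ)/(2*ρsq)) = 2*π*ρsq/(k:ℝ) := by
        field_simp
      rw [heq, div_le_iff₀ hk0]
      have hρw : ρsq ≤ w*(k:ℝ) := by
        have : u = w*(k:ℝ) := by rw [← hkwu]; ring
        linarith
      have e1 : 2*π*ρsq ≤ 8*ρsq :=
        mul_le_mul_of_nonneg_right (by linarith [Real.pi_le_four] : (2:ℝ)*π ≤ 8) hρsq_pos.le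
      have e2 : (0:ℝ) ≤ w*(k:ℝ) := mul_nonneg hw_pos.le hk0.le
      linarith [e1, hρw, e2]
    have hsqrt9 : Real.sqrt 9 = 3 := by
      rw [show (9:ℝ) = 3^2 by norm_num, Real.sqrt_sq (by norm_num : (0:ℝ) ≤ 3)]
    have hsq : Real.sqrt (π / ((k:ℝ)/(2*ρsq))) ≤ 3*Real.sqrt w := by
      calc Real.sqrt (π / ((k:ℝ)/(2*ρsq))) ≤ Real.sqrt (9*w) := Real.sqrt_le_sqrt hπlam
        _ = 3*Real.sqrt w := by rw [Real.sqrt_mul (by norm_num : (0:ℝ) ≤ 9) w, hsqrt9]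
    have hexp3 : Real.exp 2⁻¹ ≤ 3 := by
      calc Real.exp 2⁻¹ ≤ Real.exp 1 := Real.exp_le_exp.mpr (by norm_num)
        _ ≤ 3 := by linarith [Real.exp_one_lt_d9]
    have hc9 : c ≤ 9*M*Real.sqrt w := by
      calc c = M * (Real.exp 2⁻¹ * Real.sqrt (π / ((k:ℝ)/(2*ρsq)))) := by rw [hcdef]; ring
        _ ≤ M * (3*(3*Real.sqrt w)) := by
            apply mul_le_mul_of_nonneg_left _ (by linarith : (0:ℝ) ≤ M)
            exact mul_le_mul hexp3 hsq (Real.sqrt_nonneg _) (by norm_num)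
        _ = 9*M*Real.sqrt w := by ring
    have hPfin : P ≤ (9*M*Real.sqrt w)^k := le_trans hPc (pow_le_pow_left₀ hc0 hc9 k)
    have hlog1 : -(n:ℝ)*εn^2 ≤ (k:ℝ) * Real.log (9*M*Real.sqrt w) := by
      rw [← hlogP, ← Real.log_pow]
      exact Real.log_le_log hPpos hPfin
    have hlogw : Real.log (Real.sqrt w) = (Real.log L - L)/2 := by
      rw [Real.log_sqrt hw_pos.le, hwdef,
        Real.log_div (ne_of_gt hL0) (ne_of_gt hn_pos), ← hLdef]
    have hlog9M : Real.log (9*M) ≤ L/8 := by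
      have h6 : |Real.log (9*M)| ≤ A0/8 := by
        have := abs_nonneg (Real.log (2*m))
        rw [hA0def]; linarith
      have h7 := le_abs_self (Real.log (9*M))
      linarith
    have hkey : Real.log (9*M*Real.sqrt w) ≤ -(L/4) := by
      rw [Real.log_mul (by positivity) (by positivity), hlogw]
      linarith
    have hfinal : (k:ℝ)*(L/4) ≤ (n:ℝ)*εn^2 := by
      have h8 := mul_le_mul_of_nonneg_left hkey (le_of_lt hk0)
      linarith
    have h9 : (n:ℝ)*εn^2 < (n:ℝ)*(u/16) := mul_lt_mul_of_pos_left hεu hn_pos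
    have h10 : (n:ℝ)*(u/16) = (k:ℝ)*L/16 := by rw [show (n:ℝ)*(u/16) = ((n:ℝ)*u)/16 by ring, hnu]
    have hkL_pos : 0 < (k:ℝ)*L := by positivity
    linarith
  · -- upper bound
    by_contra hcon
    push_neg at hcon
    have hρbig : u < ρsq := by
      have h1 : K^2*((1+1/K^2)*(T+u)) < K^2*εn^2 := mul_lt_mul_of_pos_left hcon (by positivity)
      have h2 : K^2*((1+1/K^2)*(T+u)) = (K^2+1)*(T+u) := by field_simp
      rw [h2] at h1
      rw [hρsqdef]
      have e : (0:ℝ) ≤ K^2*(T+u) := by positivity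
      have e2 : (K^2+1)*(T+u) = K^2*(T+u) + (T+u) := by ring
      linarith [e, h1, e2]
    set δ := Real.sqrt w with hδdef
    have hδ_pos : 0 < δ := Real.sqrt_pos.mpr hw_pos
    have hδ1 : δ ≤ 1 := Real.sqrt_le_one.mpr hw1
    have hδsq : δ^2 = w := Real.sq_sqrt hw_pos.le
    have hmint : ∀ (i : Fin k) (t : ℝ),
        t ∈ Set.Icc ((fun i : Fin k => θ₀ (i:ℕ)) i - δ) ((fun i : Fin k => θ₀ (i:ℕ)) i + δ) →
          m ≤ g t := by
      intro i t ht
      obtain ⟨ht1, ht2⟩ := ht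
      apply hmb
      obtain ⟨hb1, hb2⟩ := abs_le.mp (hθb i)
      simp only at ht1 ht2
      constructor
      · rw [hBdef]; linarith
      · rw [hBdef]; linarith
    have hsub : (Set.univ : Set (Fin k)).pi
        (fun i : Fin k => Set.Icc ((fun i : Fin k => θ₀ (i:ℕ)) i - δ)
          ((fun i : Fin k => θ₀ (i:ℕ)) i + δ)) ⊆ Aset := by
      intro x hx
      rw [Set.mem_univ_pi] at hx
      have hb : ∀ i : Fin k, (x i - θ₀ (i:ℕ))^2 ≤ w := by
        intro i
        obtain ⟨h1, h2⟩ := hx i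
        simp only at h1 h2
        have habs : |x i - θ₀ (i:ℕ)| ≤ δ := abs_le.mpr ⟨by linarith, by linarith⟩
        calc (x i - θ₀ (i:ℕ))^2 = |x i - θ₀ (i:ℕ)|^2 := (sq_abs _).symm
          _ ≤ δ^2 := pow_le_pow_left₀ (abs_nonneg _) habs 2
          _ = w := hδsq
      have hsum : ∑ i : Fin k, (x i - θ₀ (i:ℕ))^2 ≤ (k:ℝ)*w := by
        calc ∑ i : Fin k, (x i - θ₀ (i:ℕ))^2 ≤ ∑ _i : Fin k, w :=
              Finset.sum_le_sum (fun i _ => hb i)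
          _ = (k:ℝ)*w := by
              rw [Finset.sum_const, Finset.card_univ, Fintype.card_fin, nsmul_eq_mul]
      show (∑ i : Fin k, (x i - θ₀ (i:ℕ))^2) + T ≤ K^2*εn^2
      have : (k:ℝ)*w = u := hkwu
      have hρs : ρsq = K^2*εn^2 - T := hρsqdef
      linarith [hρbig]
    have hlow := measure_box_lower g hg0 hg_cont hg_int k (fun i : Fin k => θ₀ (i:ℕ)) δ m
      hδ_pos.le hm_pos.le hmint Aset hsub
    rw [hμA] at hlow
    have hlow2 : (m*(2*δ))^k ≤ P := (ENNReal.ofReal_le_ofReal_iff hPpos.le).mp hlow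
    have hmd_pos : 0 < m*(2*δ) := by positivity
    have hlog2 : (k:ℝ)*Real.log (m*(2*δ)) ≤ -(n:ℝ)*εn^2 := by
      rw [← hlogP, ← Real.log_pow]
      exact Real.log_le_log (pow_pos hmd_pos k) hlow2
    have hlogw : Real.log δ = (Real.log L - L)/2 := by
      rw [hδdef, Real.log_sqrt hw_pos.le, hwdef,
        Real.log_div (ne_of_gt hL0) (ne_of_gt hn_pos), ← hLdef]
    have hmδ : Real.log (m*(2*δ)) = Real.log (2*m) + (Real.log L - L)/2 := by
      rw [show m*(2*δ) = (2*m)*δ by ring,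
        Real.log_mul (by positivity) (ne_of_gt hδ_pos), hlogw]
    have hlog2m : -(L/2) ≤ Real.log (2*m) := by
      have h6 : |Real.log (2*m)| ≤ A0/2 := by
        have := abs_nonneg (Real.log (9*M))
        rw [hA0def]; linarith
      have h7 := neg_abs_le (Real.log (2*m))
      linarith
    have hlogL0 : 0 ≤ Real.log L := Real.log_nonneg (by linarith)
    have hlower : -L ≤ Real.log (m*(2*δ)) := by rw [hmδ]; linarith
    have h3 : (n:ℝ)*εn^2 ≤ (k:ℝ)*L := by
      have h8 := mul_le_mul_of_nonneg_left hlower (le_of_lt hk0)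
      linarith
    have h4 : εn^2 ≤ u := by
      rw [hudef, le_div_iff₀ hn_pos]
      linarith
    have h5 : T+u ≤ (1+1/K^2)*(T+u) := by
      apply le_mul_of_one_le_left (by linarith : (0:ℝ) ≤ T+u)
      have h9 : (0:ℝ) < 1/K^2 := by positivity
      linarith
    linarith

end
end

section
/- Let 0 < β and k_β(n) = ⌊(n/log n)^{1/(2β+1)}⌋. For θ₀ with θ₀,i² = (1+i)^{−2β−1}, the quantity r(k) = ∑_{i>k}θ₀,i² + k log n / n is minimized over k ∈ {2,…,⌊εn/log n⌋} up to constants at k ≍ k_β(n), and min_k r(k) ≍ (n/log n)^{−2β/(2β+1)}, this being both an upper and a lower bound. -/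
open Real

lemma key (s a : ℝ) (hs : 0 < s) (ha : 0 < a) :
    s * (a+1) ^ (-s-1) ≤ a ^ (-s) - (a+1) ^ (-s) ∧
    a ^ (-s) - (a+1) ^ (-s) ≤ s * a ^ (-s-1) := by
  have hab : a ≤ a + 1 := by linarith
  have h0 : (0:ℝ) ∉ Set.uIcc a (a+1) := by
    rw [Set.uIcc_of_le hab]; intro h; exact absurd h.1 (by linarith)
  have hint : ∫ x in a..(a+1), x ^ (-s-1) = (a ^ (-s) - (a+1) ^ (-s)) / s := by
    rw [integral_rpow (Or.inr ⟨by linarith, h0⟩)]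
    have : -s-1+1 = -s := by ring
    rw [this]
    generalize a ^ (-s) = A
    generalize (a+1) ^ (-s) = B
    rw [div_neg, ← neg_div, neg_sub]
  have hcont : ContinuousOn (fun x : ℝ => x ^ (-s-1)) (Set.uIcc a (a+1)) := by
    apply ContinuousOn.rpow_const continuousOn_id
    intro x hx
    left
    rw [Set.uIcc_of_le hab] at hx
    exact ne_of_gt (lt_of_lt_of_le ha hx.1)
  have hii : IntervalIntegrable (fun x : ℝ => x ^ (-s-1)) MeasureTheory.volume a (a+1) :=
    hcont.intervalIntegrable
  constructor
  · have h1 : (a+1) ^ (-s-1) ≤ ∫ x in a..(a+1), x ^ (-s-1) := by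
      have := intervalIntegral.integral_mono_on hab
        (intervalIntegrable_const (c := (a+1) ^ (-s-1))) hii
        (fun x hx => rpow_le_rpow_of_nonpos (lt_of_lt_of_le ha hx.1) hx.2 (by linarith))
      simpa using this
    rw [hint] at h1
    calc s * (a+1)^(-s-1) ≤ s * ((a ^ (-s) - (a+1) ^ (-s)) / s) := by
          exact mul_le_mul_of_nonneg_left h1 hs.le
      _ = a ^ (-s) - (a+1) ^ (-s) := by field_simp
  · have h1 : (∫ x in a..(a+1), x ^ (-s-1)) ≤ a ^ (-s-1) := by
      have := intervalIntegral.integral_mono_on hab hii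
        (intervalIntegrable_const (c := a ^ (-s-1)))
        (fun x hx => rpow_le_rpow_of_nonpos ha hx.1 (by linarith))
      simpa using this
    rw [hint] at h1
    calc a ^ (-s) - (a+1) ^ (-s) = s * ((a ^ (-s) - (a+1) ^ (-s)) / s) := by field_simp
      _ ≤ s * a ^ (-s-1) := mul_le_mul_of_nonneg_left h1 hs.le

lemma tele (s c : ℝ) (hs : 0 < s) (hc : 0 < c) :
    HasSum (fun i : ℕ => (c + i) ^ (-s) - (c + i + 1) ^ (-s)) (c ^ (-s)) := by
  have hpos : ∀ i : ℕ, (0:ℝ) < c + i := fun i => by positivity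
  have hnn : ∀ i : ℕ, 0 ≤ (c + i) ^ (-s) - (c + i + 1) ^ (-s) := fun i =>
    sub_nonneg.2 (rpow_le_rpow_of_nonpos (hpos i) (by linarith) (by linarith))
  rw [hasSum_iff_tendsto_nat_of_nonneg hnn]
  have heq : ∀ n : ℕ, ∑ i ∈ Finset.range n, ((c + i) ^ (-s) - (c + i + 1) ^ (-s))
      = c ^ (-s) - (c + n) ^ (-s) := by
    intro n
    have := Finset.sum_range_sub' (fun i : ℕ => (c + i) ^ (-s)) n
    simp only [Nat.cast_zero, add_zero, Nat.cast_add, Nat.cast_one] at this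
    rw [← this]
    apply Finset.sum_congr rfl
    intro i _
    norm_num [add_assoc]
  simp only [heq]
  have h2 : Filter.Tendsto (fun n : ℕ => (c + n) ^ (-s)) Filter.atTop (nhds 0) := by
    apply (tendsto_rpow_neg_atTop hs).comp
    exact Filter.tendsto_atTop_add_const_left _ c tendsto_natCast_atTop_atTop
  have := Filter.Tendsto.const_sub (c ^ (-s)) h2
  simpa using this

lemma summable_F (s : ℝ) (hs : 0 < s) (k : ℕ) :
    Summable (fun i : ℕ => if k < i then ((1:ℝ) + i) ^ (-s - 1) else 0) := by
  have hbase : Summable (fun i : ℕ => ((1:ℝ) + i) ^ (-s - 1)) := by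
    have h1 : Summable (fun n : ℕ => (n:ℝ) ^ (-s-1)) :=
      summable_nat_rpow.2 (by linarith)
    have h2 := (summable_nat_add_iff 1).2 h1
    refine h2.congr fun i => ?_
    push_cast
    ring_nf
  refine Summable.of_nonneg_of_le (fun i => ?_) (fun i => ?_) hbase
  · split <;> positivity
  · split
    · exact le_rfl
    · positivity

lemma tail_shift (s : ℝ) (hs : 0 < s) (k : ℕ) :
    (∑' i : ℕ, if k < i then ((1:ℝ) + i) ^ (-s - 1) else 0)
      = ∑' i : ℕ, ((k:ℝ) + 2 + i) ^ (-s - 1) := by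
  rw [← (summable_F s hs k).sum_add_tsum_nat_add (k+1)]
  have h1 : ∑ i ∈ Finset.range (k+1),
      (if k < i then ((1:ℝ) + i) ^ (-s - 1) else 0) = 0 := by
    apply Finset.sum_eq_zero
    intro i hi
    rw [Finset.mem_range] at hi
    rw [if_neg (by omega)]
  rw [h1, zero_add]
  apply tsum_congr
  intro i
  rw [if_pos (by omega)]
  push_cast
  ring_nf

lemma tail_ub (s : ℝ) (hs : 0 < s) (k : ℕ) (hk : 1 ≤ k) :
    (∑' i : ℕ, if k < i then ((1:ℝ) + i) ^ (-s - 1) else 0) ≤ (1/s) * (k:ℝ) ^ (-s) := by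
  rw [tail_shift s hs k]
  have hT := tele s ((k:ℝ)+1) hs (by positivity)
  have hle : ∀ i : ℕ, ((k:ℝ) + 2 + i) ^ (-s - 1)
      ≤ (1/s) * ((((k:ℝ)+1) + i) ^ (-s) - (((k:ℝ)+1) + i + 1) ^ (-s)) := by
    intro i
    have h := (key s ((k:ℝ)+1+i) hs (by positivity)).1
    rw [show (k:ℝ)+2+i = (k:ℝ)+1+i+1 from by ring]
    calc ((k:ℝ) + 1 + i + 1) ^ (-s - 1)
        = (1/s) * (s * ((k:ℝ)+1+i+1) ^ (-s-1)) := by field_simp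
      _ ≤ (1/s) * ((((k:ℝ)+1) + i) ^ (-s) - (((k:ℝ)+1) + i + 1) ^ (-s)) :=
          mul_le_mul_of_nonneg_left h (by positivity)
  have hsum : Summable (fun i : ℕ => ((k:ℝ) + 2 + i) ^ (-s - 1)) := by
    have := (summable_nat_add_iff (k+1)).2 (summable_F s hs k)
    refine this.congr fun i => ?_
    rw [if_pos (by omega)]
    push_cast
    ring_nf
  calc ∑' i : ℕ, ((k:ℝ) + 2 + i) ^ (-s - 1)
      ≤ ∑' i : ℕ, (1/s) * ((((k:ℝ)+1) + i) ^ (-s) - (((k:ℝ)+1) + i + 1) ^ (-s)) :=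
        Summable.tsum_le_tsum hle hsum (hT.summable.mul_left (1/s))
    _ = (1/s) * (((k:ℝ)+1) ^ (-s)) := (hT.mul_left (1/s)).tsum_eq
    _ ≤ (1/s) * (k:ℝ) ^ (-s) := by
        apply mul_le_mul_of_nonneg_left _ (by positivity)
        exact rpow_le_rpow_of_nonpos (by positivity) (by linarith) (by linarith)

lemma tail_lb (s : ℝ) (hs : 0 < s) (k : ℕ) :
    (1/s) * ((k:ℝ) + 2) ^ (-s) ≤
      (∑' i : ℕ, if k < i then ((1:ℝ) + i) ^ (-s - 1) else 0) := by
  rw [tail_shift s hs k]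
  have hT := tele s ((k:ℝ)+2) hs (by positivity)
  have hle : ∀ i : ℕ, (1/s) * ((((k:ℝ)+2) + i) ^ (-s) - (((k:ℝ)+2) + i + 1) ^ (-s))
      ≤ ((k:ℝ) + 2 + i) ^ (-s - 1) := by
    intro i
    have h := (key s ((k:ℝ)+2+i) hs (by positivity)).2
    calc (1/s) * ((((k:ℝ)+2) + i) ^ (-s) - (((k:ℝ)+2) + i + 1) ^ (-s))
        ≤ (1/s) * (s * ((k:ℝ)+2+i) ^ (-s-1)) :=
          mul_le_mul_of_nonneg_left h (by positivity)
      _ = ((k:ℝ) + 2 + i) ^ (-s - 1) := by field_simp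
  calc (1/s) * ((k:ℝ) + 2) ^ (-s) = ∑' i : ℕ,
        (1/s) * ((((k:ℝ)+2) + i) ^ (-s) - (((k:ℝ)+2) + i + 1) ^ (-s)) :=
        (hT.mul_left (1/s)).tsum_eq.symm
    _ ≤ ∑' i : ℕ, ((k:ℝ) + 2 + i) ^ (-s - 1) := by
        apply Summable.tsum_le_tsum hle (hT.summable.mul_left (1/s))
        have := (summable_nat_add_iff (k+1)).2 (summable_F s hs k)
        refine this.congr fun i => ?_
        rw [if_pos (by omega)]
        push_cast
        ring_nf

/-- for `θ₀` with `θ₀_i² = (1+i)^{-2β-1}` (`i ≥ 1`), the criterion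
`r(k) = ∑_{i>k} θ₀_i² + k log n / n` is minimized, up to constants, at
`k_β(n) = ⌊(n/log n)^{1/(2β+1)}⌋`, and the minimal value is `≍ (n/log n)^{-2β/(2β+1)}`,
both as an upper and a lower bound. -/
theorem stmt_19 (β : ℝ) (hβ : 0 < β) :
    ∃ cl cu : ℝ, ∃ N : ℕ, 0 < cl ∧ 0 < cu ∧
      ∀ n : ℕ, N ≤ n →
        (2 ≤ Nat.floor (((n : ℝ) / Real.log n) ^ ((1 : ℝ) / (2 * β + 1)))) ∧
        (∀ k : ℕ, 2 ≤ k →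
          cl * ((n : ℝ) / Real.log n) ^ (-(2 * β) / (2 * β + 1)) ≤
            (∑' i : ℕ, if k < i then ((1 : ℝ) + i) ^ (-(2 * β) - 1) else 0)
              + (k : ℝ) * Real.log n / n) ∧
        ((∑' i : ℕ, if Nat.floor (((n : ℝ) / Real.log n) ^ ((1 : ℝ) / (2 * β + 1))) < i
              then ((1 : ℝ) + i) ^ (-(2 * β) - 1) else 0)
            + (Nat.floor (((n : ℝ) / Real.log n) ^ ((1 : ℝ) / (2 * β + 1))) : ℝ) *
                Real.log n / n
          ≤ cu * ((n : ℝ) / Real.log n) ^ (-(2 * β) / (2 * β + 1))) := by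
  have hs : (0:ℝ) < 2 * β := by linarith
  have hγ : (0:ℝ) < 2 * β + 1 := by linarith
  refine ⟨min ((1/(2*β)) * (2:ℝ) ^ (-(2*β))) 1, (1/(2*β)) * (2:ℝ) ^ (2*β) + 1,
    max 3 ⌈(2:ℝ) ^ (4*β+4)⌉₊, lt_min (by positivity) one_pos, by positivity, ?_⟩
  intro n hn
  have hn3 : 3 ≤ n := le_trans (le_max_left _ _) hn
  have hn2 : (2:ℝ) ^ (4*β+4) ≤ (n:ℝ) := by
    have := le_trans (le_max_right _ _) hn
    exact (Nat.ceil_le.1 this)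
  have hn1 : (1:ℝ) < (n:ℝ) := by exact_mod_cast (by omega : 1 < n)
  have hnpos : (0:ℝ) < n := by linarith
  have hlogpos : 0 < Real.log n := Real.log_pos hn1
  set x : ℝ := (n:ℝ) / Real.log n with hxdef
  have hxpos : 0 < x := div_pos hnpos hlogpos
  have hsq : (0:ℝ) < Real.sqrt n := Real.sqrt_pos.2 hnpos
  -- log n ≤ 2 √n
  have hlog2 : Real.log n ≤ 2 * Real.sqrt n := by
    have h1 : Real.log n = 2 * Real.log (Real.sqrt n) := by
      rw [Real.log_sqrt hnpos.le]
      ring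
    have h2 : Real.log (Real.sqrt n) ≤ Real.sqrt n - 1 :=
      Real.log_le_sub_one_of_pos hsq
    linarith
  -- x ≥ √n / 2
  have hx_ge : Real.sqrt n / 2 ≤ x := by
    have h1 : (n:ℝ) / (2 * Real.sqrt n) ≤ x :=
      div_le_div_of_nonneg_left hnpos.le hlogpos hlog2
    have h2 : (n:ℝ) / (2 * Real.sqrt n) = Real.sqrt n / 2 := by
      field_simp
      nlinarith [Real.mul_self_sqrt hnpos.le]
    linarith
  -- √n ≥ 2^(2β+2)
  have hsq_ge : (2:ℝ) ^ (2*β+2) ≤ Real.sqrt n := by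
    have h1 : Real.sqrt ((2:ℝ) ^ (4*β+4)) ≤ Real.sqrt n := Real.sqrt_le_sqrt hn2
    have h2 : Real.sqrt ((2:ℝ) ^ (4*β+4)) = (2:ℝ) ^ (2*β+2) := by
      rw [Real.sqrt_eq_rpow, ← Real.rpow_mul (by norm_num)]
      congr 1
      ring
    linarith
  -- x ≥ 2^(2β+1)
  have hx_ge2 : (2:ℝ) ^ (2*β+1) ≤ x := by
    have h2 : (2:ℝ) ^ (2*β+2) / 2 = (2:ℝ) ^ (2*β+1) := by
      rw [show (2*β+2 : ℝ) = (2*β+1) + 1 by ring, Real.rpow_add (by norm_num),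
        Real.rpow_one]
      ring
    calc (2:ℝ) ^ (2*β+1) = (2:ℝ) ^ (2*β+2) / 2 := h2.symm
      _ ≤ Real.sqrt n / 2 := by linarith
      _ ≤ x := hx_ge
  set t : ℝ := x ^ ((1:ℝ) / (2*β+1)) with htdef
  have htpos : 0 < t := Real.rpow_pos_of_pos hxpos _
  have ht2 : (2:ℝ) ≤ t := by
    calc (2:ℝ) = ((2:ℝ) ^ (2*β+1)) ^ ((1:ℝ)/(2*β+1)) := by
          rw [← Real.rpow_mul (by norm_num), mul_one_div, div_self hγ.ne', Real.rpow_one]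
      _ ≤ t := Real.rpow_le_rpow (by positivity) hx_ge2 (by positivity)
  set m : ℕ := Nat.floor t with hmdef
  have hm2 : 2 ≤ m := Nat.le_floor (by exact_mod_cast ht2)
  have hmt : (m:ℝ) ≤ t := Nat.floor_le htpos.le
  have hmt2 : t / 2 ≤ (m:ℝ) := by
    have := Nat.sub_one_lt_floor t
    have : t - 1 < (m:ℝ) := by exact_mod_cast this
    linarith
  have hmpos : (0:ℝ) < m := by
    have : (2:ℝ) ≤ (m:ℝ) := by exact_mod_cast hm2
    linarith
  -- exponent identities
  have hts : t ^ (-(2*β)) = x ^ (-(2*β) / (2*β+1)) := by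
    rw [htdef, ← Real.rpow_mul hxpos.le]
    congr 1
    field_simp
  have htx : t / x = x ^ (-(2*β) / (2*β+1)) := by
    have : t / x = x ^ ((1:ℝ)/(2*β+1)) * x ^ (-1:ℝ) := by
      rw [Real.rpow_neg_one]
      rfl
    rw [this, ← Real.rpow_add hxpos]
    congr 1
    field_simp
    ring
  have hxe_pos : 0 < x ^ (-(2*β) / (2*β+1)) := Real.rpow_pos_of_pos hxpos _
  have hklog : ∀ k : ℕ, (k:ℝ) * Real.log n / n = (k:ℝ) / x := by
    intro k
    rw [hxdef]
    field_simp
  refine ⟨hm2, ?_, ?_⟩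
  · -- lower bound
    intro k hk
    have hkpos : (0:ℝ) < k := by exact_mod_cast (by omega : 0 < k)
    have hT := tail_lb (2*β) hs k
    have hTnn : 0 ≤ ∑' i : ℕ, if k < i then ((1:ℝ) + i) ^ (-(2*β) - 1) else 0 :=
      tsum_nonneg (fun i => by split <;> positivity)
    rw [hklog k]
    by_cases hcase : (k:ℝ) ≤ t
    · -- tail dominates
      have h1 : (2:ℝ) ^ (-(2*β)) * x ^ (-(2*β) / (2*β+1)) ≤ ((k:ℝ) + 2) ^ (-(2*β)) := by
        calc (2:ℝ) ^ (-(2*β)) * x ^ (-(2*β) / (2*β+1))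
            = (2:ℝ) ^ (-(2*β)) * t ^ (-(2*β)) := by rw [hts]
          _ = (2 * t) ^ (-(2*β)) := (Real.mul_rpow (by norm_num) htpos.le).symm
          _ ≤ ((k:ℝ) + 2) ^ (-(2*β)) := by
              apply rpow_le_rpow_of_nonpos (by positivity) _ (by linarith)
              have : (2:ℝ) ≤ (k:ℝ) := by exact_mod_cast hk
              nlinarith
      calc min ((1/(2*β)) * (2:ℝ) ^ (-(2*β))) 1 * x ^ (-(2*β) / (2*β+1))
          ≤ (1/(2*β)) * (2:ℝ) ^ (-(2*β)) * x ^ (-(2*β) / (2*β+1)) := by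
            apply mul_le_mul_of_nonneg_right (min_le_left _ _) hxe_pos.le
        _ = (1/(2*β)) * ((2:ℝ) ^ (-(2*β)) * x ^ (-(2*β) / (2*β+1))) := by ring
        _ ≤ (1/(2*β)) * ((k:ℝ) + 2) ^ (-(2*β)) :=
            mul_le_mul_of_nonneg_left h1 (by positivity)
        _ ≤ ∑' i : ℕ, if k < i then ((1:ℝ) + i) ^ (-(2*β) - 1) else 0 := hT
        _ ≤ _ + (k:ℝ) / x := le_add_of_nonneg_right (by positivity)
    · -- k log n / n dominates
      push_neg at hcase
      have h1 : x ^ (-(2*β) / (2*β+1)) ≤ (k:ℝ) / x := by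
        rw [← htx]
        gcongr
      calc min ((1/(2*β)) * (2:ℝ) ^ (-(2*β))) 1 * x ^ (-(2*β) / (2*β+1))
          ≤ 1 * x ^ (-(2*β) / (2*β+1)) :=
            mul_le_mul_of_nonneg_right (min_le_right _ _) hxe_pos.le
        _ = x ^ (-(2*β) / (2*β+1)) := one_mul _
        _ ≤ (k:ℝ) / x := h1
        _ ≤ _ + (k:ℝ) / x := le_add_of_nonneg_left hTnn
  · -- upper bound at m
    have hT := tail_ub (2*β) hs m (by omega)
    have h1 : (m:ℝ) ^ (-(2*β)) ≤ (2:ℝ) ^ (2*β) * x ^ (-(2*β) / (2*β+1)) := by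
      calc (m:ℝ) ^ (-(2*β)) ≤ (t/2) ^ (-(2*β)) :=
            rpow_le_rpow_of_nonpos (by positivity) hmt2 (by linarith)
        _ = t ^ (-(2*β)) / (2:ℝ) ^ (-(2*β)) :=
            Real.div_rpow htpos.le (by norm_num) _
        _ = (2:ℝ) ^ (2*β) * t ^ (-(2*β)) := by
            rw [Real.rpow_neg (by norm_num : (0:ℝ) ≤ 2), div_inv_eq_mul]
            ring
        _ = (2:ℝ) ^ (2*β) * x ^ (-(2*β) / (2*β+1)) := by rw [hts]
    have h2 : (m:ℝ) * Real.log n / n ≤ x ^ (-(2*β) / (2*β+1)) := by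
      rw [hklog m, ← htx]
      gcongr
    calc (∑' i : ℕ, if m < i then ((1:ℝ) + i) ^ (-(2*β) - 1) else 0)
          + (m:ℝ) * Real.log n / n
        ≤ (1/(2*β)) * (m:ℝ) ^ (-(2*β)) + x ^ (-(2*β) / (2*β+1)) :=
          add_le_add hT h2
      _ ≤ (1/(2*β)) * ((2:ℝ) ^ (2*β) * x ^ (-(2*β) / (2*β+1)))
            + x ^ (-(2*β) / (2*β+1)) := by
          exact add_le_add (mul_le_mul_of_nonneg_left h1 (by positivity)) le_rfl
      _ = ((1/(2*β)) * (2:ℝ) ^ (2*β) + 1) * x ^ (-(2*β) / (2*β+1)) := by ring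
end
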